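/- arXiv:1902.03418 — 2 statements merged into one kernel-verified Lean document; each statement's English description precedes it below -/
import Mathlib

section
/- The derivative of a radial polynomial admits the expansion (d/dr) R_m^{|l|}(r) = Σ_{j=0}^{(m-1-|l-1|)/2} (m-2j) R_{m-1-2j}^{|l-1|}(r) + Σ_{j=0}^{(m-1-|l+1|)/2} (m-2j) R_{m-1-2j}^{|l+1|}(r), for all (l,m) with |l| ≤ m and m-|l| even, m ≥ 1. -/
/-- The radial (Zernike) polynomial `R_m^{|l|}` for admissible index pairs. -/
noncomputable def radialPolyAux (m l : ℕ) (r : ℝ) : ℝ :=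
  ∑ j ∈ Finset.range ((m - l) / 2 + 1),
    (-1 : ℝ) ^ j * (Nat.factorial (m - j) : ℝ) /
      ((Nat.factorial j : ℝ) * (Nat.factorial ((m + l) / 2 - j) : ℝ) *
        (Nat.factorial ((m - l) / 2 - j) : ℝ)) * r ^ (m - 2 * j)

/-- The radial polynomial `R_m^{|l|}` with integer angular index `l`, with the convention
that it vanishes when the index pair `(l,m)` is not admissible. -/
noncomputable def radialPoly (m : ℕ) (l : ℤ) (r : ℝ) : ℝ :=
  if l.natAbs ≤ m ∧ Even (m - l.natAbs) then radialPolyAux m l.natAbs r else 0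

/-- coefficient -/
noncomputable def zkC (a q j : ℕ) : ℝ :=
  (-1 : ℝ) ^ j * (Nat.factorial (a + 2 * q - j) : ℝ) /
    ((Nat.factorial j : ℝ) * (Nat.factorial (a + q - j) : ℝ) *
      (Nat.factorial (q - j) : ℝ))

noncomputable def zkP (a q : ℕ) (r : ℝ) : ℝ :=
  ∑ j ∈ Finset.range (q + 1), zkC a q j * r ^ (a + 2 * q - 2 * j)

noncomputable def zkD (a q : ℕ) (r : ℝ) : ℝ :=
  ∑ j ∈ Finset.range (q + 1),
    zkC a q j * ((a + 2 * q - 2 * j : ℕ) : ℝ) * r ^ (a + 2 * q - 2 * j - 1)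

lemma zkC_eval (a q j x y z : ℕ) (h1 : a + 2 * q - j = x) (h2 : a + q - j = y)
    (h3 : q - j = z) :
    zkC a q j = (-1 : ℝ) ^ j * (Nat.factorial x : ℝ) /
      ((Nat.factorial j : ℝ) * (Nat.factorial y : ℝ) * (Nat.factorial z : ℝ)) := by
  rw [zkC, h1, h2, h3]

lemma fact_succ (n : ℕ) : ((Nat.factorial (n + 1) : ℝ)) = (n + 1) * Nat.factorial n := by
  rw [Nat.factorial_succ]; push_cast; ring

lemma fact_ne (n : ℕ) : ((Nat.factorial n : ℝ)) ≠ 0 := by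
  exact_mod_cast n.factorial_ne_zero

lemma radialPoly_eq_P (l : ℤ) (a q : ℕ) (h : l.natAbs = a) :
    radialPoly (a + 2 * q) l = zkP a q := by
  funext r
  rw [radialPoly, if_pos ⟨by omega, ⟨q, by omega⟩⟩, h, radialPolyAux, zkP]
  have h1 : (a + 2 * q - a) / 2 = q := by omega
  have h2 : (a + 2 * q + a) / 2 = a + q := by omega
  rw [h1]
  refine Finset.sum_congr rfl fun j hj => ?_
  rw [h2, zkC]

lemma radialPoly_zero (m : ℕ) (l : ℤ) (h : ¬(l.natAbs ≤ m ∧ Even (m - l.natAbs))) :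
    radialPoly m l = fun _ => 0 := by
  funext r; rw [radialPoly, if_neg h]

lemma hasDerivAt_zkP (a q : ℕ) (r : ℝ) : HasDerivAt (zkP a q) (zkD a q r) r := by
  unfold zkP zkD
  apply HasDerivAt.fun_sum
  intro j hj
  have h := (hasDerivAt_pow (a + 2 * q - 2 * j) r).const_mul (zkC a q j)
  convert h using 1
  · rfl
  ring

lemma deriv_zkP (a q : ℕ) (r : ℝ) : deriv (zkP a q) r = zkD a q r :=
  (hasDerivAt_zkP a q r).deriv

/-- base case -/
lemma keyq0 (a : ℕ) (ha : 1 ≤ a) (r : ℝ) : zkD a 0 r = (a : ℝ) * zkP (a - 1) 0 r := by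
  unfold zkD zkP
  rw [Finset.sum_range_one, Finset.sum_range_one]
  rw [zkC, zkC]
  simp only [Nat.mul_zero, Nat.add_zero, Nat.sub_zero, Nat.sub_self, Nat.factorial_zero]
  field_simp [fact_ne]

lemma key1 (a q : ℕ) (ha : 1 ≤ a) (r : ℝ) :
    zkD a (q + 1) r =
      ((a : ℝ) + 2 * (q + 1)) * (zkP (a - 1) (q + 1) r + zkP (a + 1) q r) + zkD a q r := by
  obtain ⟨b, rfl⟩ : ∃ b, a = b + 1 := ⟨a - 1, by omega⟩
  have hH : zkP (b + 1 + 1) q r =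
      ∑ t ∈ Finset.range (q + 1 + 1),
        (if t ≤ q then zkC (b + 1 + 1) q t * r ^ (b + 1 + 1 + 2 * q - 2 * t) else 0) := by
    rw [Finset.sum_range_succ, if_neg (by omega), add_zero, zkP]
    exact Finset.sum_congr rfl fun t ht =>
      (if_pos (Nat.lt_succ_iff.mp (Finset.mem_range.mp ht))).symm
  have hK : zkD (b + 1) q r =
      ∑ t ∈ Finset.range (q + 1 + 1),
        (if 1 ≤ t then
          zkC (b + 1) q (t - 1) * ((b + 1 + 2 * q - 2 * (t - 1) : ℕ) : ℝ) *
            r ^ (b + 1 + 2 * q - 2 * (t - 1) - 1)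
        else 0) := by
    rw [Finset.sum_range_succ', if_neg (by omega), add_zero, zkD]
    refine Finset.sum_congr rfl fun t ht => ?_
    rw [if_pos (by omega)]
    simp [Nat.add_sub_cancel]
  rw [hH, hK, zkD, zkP, ← Finset.sum_add_distrib, Finset.mul_sum,
    ← Finset.sum_add_distrib]
  refine Finset.sum_congr rfl fun t ht => ?_
  have ht' : t < q + 1 + 1 := Finset.mem_range.mp ht
  rcases eq_or_ne t 0 with rfl | ht0
  · rw [if_pos (by omega), if_neg (by omega)]
    rw [zkC_eval (b + 1) (q + 1) 0 (b + 2 * q + 2 + 1) (b + q + 1 + 1) (q + 1)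
        (by omega) (by omega) (by omega),
      zkC_eval (b + 1 - 1) (q + 1) 0 (b + 2 * q + 2) (b + q + 1) (q + 1)
        (by omega) (by omega) (by omega),
      zkC_eval (b + 1 + 1) q 0 (b + 2 * q + 2) (b + q + 1 + 1) q
        (by omega) (by omega) (by omega)]
    rw [show b + 1 + 2 * (q + 1) - 2 * 0 - 1 = b + 2 * q + 2 by omega,
      show b + 1 + 2 * (q + 1) - 2 * 0 = b + 2 * q + 3 by omega,
      show b + 1 - 1 + 2 * (q + 1) - 2 * 0 = b + 2 * q + 2 by omega,
      show b + 1 + 1 + 2 * q - 2 * 0 = b + 2 * q + 2 by omega]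
    rw [fact_succ (b + 2 * q + 2), fact_succ (b + q + 1), fact_succ q]
    push_cast
    field_simp [fact_ne]
    ring
  rcases eq_or_ne t (q + 1) with rfl | ht1
  · rw [if_neg (by omega), if_pos (by omega)]
    rw [zkC_eval (b + 1) (q + 1) (q + 1) (b + q + 1 + 1) (b + 1) 0
        (by omega) (by omega) (by omega),
      zkC_eval (b + 1 - 1) (q + 1) (q + 1) (b + q + 1) b 0
        (by omega) (by omega) (by omega),
      zkC_eval (b + 1) q (q + 1 - 1) (b + q + 1) (b + 1) 0
        (by omega) (by omega) (by omega)]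
    rw [show b + 1 + 2 * (q + 1) - 2 * (q + 1) - 1 = b by omega,
      show b + 1 + 2 * (q + 1) - 2 * (q + 1) = b + 1 by omega,
      show b + 1 - 1 + 2 * (q + 1) - 2 * (q + 1) = b by omega,
      show b + 1 + 2 * q - 2 * (q + 1 - 1) - 1 = b by omega,
      show b + 1 + 2 * q - 2 * (q + 1 - 1) = b + 1 by omega,
      show q + 1 - 1 = q by omega]
    rw [fact_succ (b + q + 1), fact_succ b, fact_succ q]
    simp only [pow_succ]
    push_cast
    field_simp [fact_ne]
    ring
  · obtain ⟨s, rfl⟩ : ∃ s, t = s + 1 := ⟨t - 1, by omega⟩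
    obtain ⟨k, rfl⟩ : ∃ k, q = s + 1 + k := ⟨q - (s + 1), by omega⟩
    rw [if_pos (by omega), if_pos (by omega)]
    rw [zkC_eval (b + 1) (s + 1 + k + 1) (s + 1) (b + s + 2 * k + 3 + 1) (b + k + 1 + 1)
        (k + 1) (by omega) (by omega) (by omega),
      zkC_eval (b + 1 - 1) (s + 1 + k + 1) (s + 1) (b + s + 2 * k + 3) (b + k + 1)
        (k + 1) (by omega) (by omega) (by omega),
      zkC_eval (b + 1 + 1) (s + 1 + k) (s + 1) (b + s + 2 * k + 3) (b + k + 1 + 1)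
        k (by omega) (by omega) (by omega),
      zkC_eval (b + 1) (s + 1 + k) (s + 1 - 1) (b + s + 2 * k + 3) (b + k + 1 + 1)
        (k + 1) (by omega) (by omega) (by omega)]
    rw [show b + 1 + 2 * (s + 1 + k + 1) - 2 * (s + 1) - 1 = b + 2 * k + 2 by omega,
      show b + 1 + 2 * (s + 1 + k + 1) - 2 * (s + 1) = b + 2 * k + 3 by omega,
      show b + 1 - 1 + 2 * (s + 1 + k + 1) - 2 * (s + 1) = b + 2 * k + 2 by omega,
      show b + 1 + 1 + 2 * (s + 1 + k) - 2 * (s + 1) = b + 2 * k + 2 by omega,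
      show b + 1 + 2 * (s + 1 + k) - 2 * (s + 1 - 1) - 1 = b + 2 * k + 2 by omega,
      show b + 1 + 2 * (s + 1 + k) - 2 * (s + 1 - 1) = b + 2 * k + 3 by omega,
      show s + 1 - 1 = s by omega]
    rw [fact_succ (b + s + 2 * k + 3), fact_succ (b + k + 1), fact_succ k, fact_succ s]
    simp only [pow_succ]
    push_cast
    field_simp [fact_ne]
    ring


lemma key0 (q : ℕ) (r : ℝ) :
    zkD 0 (q + 1) r = (2 * ((q : ℝ) + 1)) * (2 * zkP 1 q r) + zkD 0 q r := by
  have hH : zkP 1 q r =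
      ∑ t ∈ Finset.range (q + 1 + 1),
        (if t ≤ q then zkC 1 q t * r ^ (1 + 2 * q - 2 * t) else 0) := by
    rw [Finset.sum_range_succ, if_neg (by omega), add_zero, zkP]
    exact Finset.sum_congr rfl fun t ht =>
      (if_pos (Nat.lt_succ_iff.mp (Finset.mem_range.mp ht))).symm
  have hK : zkD 0 q r =
      ∑ t ∈ Finset.range (q + 1 + 1),
        (if 1 ≤ t then
          zkC 0 q (t - 1) * ((0 + 2 * q - 2 * (t - 1) : ℕ) : ℝ) *
            r ^ (0 + 2 * q - 2 * (t - 1) - 1)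
        else 0) := by
    rw [Finset.sum_range_succ', if_neg (by omega), add_zero, zkD]
    refine Finset.sum_congr rfl fun t ht => ?_
    rw [if_pos (by omega)]
    simp [Nat.add_sub_cancel]
  rw [hH, hK, zkD, Finset.mul_sum, Finset.mul_sum, ← Finset.sum_add_distrib]
  refine Finset.sum_congr rfl fun t ht => ?_
  have ht' : t < q + 1 + 1 := Finset.mem_range.mp ht
  rcases eq_or_ne t 0 with rfl | ht0
  · rw [if_pos (by omega), if_neg (by omega)]
    rw [zkC_eval 0 (q + 1) 0 (2 * q + 1 + 1) (q + 1) (q + 1) (by omega) (by omega) (by omega),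
      zkC_eval 1 q 0 (2 * q + 1) (q + 1) q (by omega) (by omega) (by omega)]
    rw [show 0 + 2 * (q + 1) - 2 * 0 - 1 = 2 * q + 1 by omega,
      show 0 + 2 * (q + 1) - 2 * 0 = 2 * q + 2 by omega,
      show 1 + 2 * q - 2 * 0 = 2 * q + 1 by omega]
    rw [fact_succ (2 * q + 1), fact_succ q]
    push_cast
    field_simp [fact_ne]
    ring
  rcases eq_or_ne t (q + 1) with rfl | ht1
  · rw [if_neg (by omega), if_pos (by omega)]
    rw [show 0 + 2 * (q + 1) - 2 * (q + 1) = 0 by omega,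
      show q + 1 - 1 = q by omega,
      show 0 + 2 * q - 2 * q = 0 by omega]
    norm_num
  · obtain ⟨s, rfl⟩ : ∃ s, t = s + 1 := ⟨t - 1, by omega⟩
    obtain ⟨k, rfl⟩ : ∃ k, q = s + 1 + k := ⟨q - (s + 1), by omega⟩
    rw [if_pos (by omega), if_pos (by omega)]
    rw [zkC_eval 0 (s + 1 + k + 1) (s + 1) (s + 2 * k + 2 + 1) (k + 1) (k + 1)
        (by omega) (by omega) (by omega),
      zkC_eval 1 (s + 1 + k) (s + 1) (s + 2 * k + 2) (k + 1) k
        (by omega) (by omega) (by omega),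
      zkC_eval 0 (s + 1 + k) (s + 1 - 1) (s + 2 * k + 2) (k + 1) (k + 1)
        (by omega) (by omega) (by omega)]
    rw [show 0 + 2 * (s + 1 + k + 1) - 2 * (s + 1) - 1 = 2 * k + 1 by omega,
      show 0 + 2 * (s + 1 + k + 1) - 2 * (s + 1) = 2 * k + 2 by omega,
      show 1 + 2 * (s + 1 + k) - 2 * (s + 1) = 2 * k + 1 by omega,
      show 0 + 2 * (s + 1 + k) - 2 * (s + 1 - 1) - 1 = 2 * k + 1 by omega,
      show 0 + 2 * (s + 1 + k) - 2 * (s + 1 - 1) = 2 * k + 2 by omega,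
      show s + 1 - 1 = s by omega]
    rw [fact_succ (s + 2 * k + 2), fact_succ k, fact_succ s]
    simp only [pow_succ]
    push_cast
    field_simp [fact_ne]
    ring

lemma L1 (a : ℕ) (ha : 1 ≤ a) (r : ℝ) : ∀ q,
    zkD a q r =
      (∑ j ∈ Finset.range (q + 1), ((a : ℝ) + 2 * q - 2 * j) * zkP (a - 1) (q - j) r) +
        ∑ j ∈ Finset.range q, ((a : ℝ) + 2 * q - 2 * j) * zkP (a + 1) (q - 1 - j) r := by
  intro q
  induction q with
  | zero =>
    rw [Finset.sum_range_zero, Finset.sum_range_one, add_zero, keyq0 a ha r]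
    norm_num
  | succ q ih =>
    rw [key1 a q ha r, ih,
      Finset.sum_range_succ'
        (fun j => ((a : ℝ) + 2 * ((q + 1 : ℕ) : ℝ) - 2 * (j : ℝ)) * zkP (a - 1) (q + 1 - j) r) (q + 1),
      Finset.sum_range_succ'
        (fun j => ((a : ℝ) + 2 * ((q + 1 : ℕ) : ℝ) - 2 * (j : ℝ)) * zkP (a + 1) (q + 1 - 1 - j) r) q]
    have e1 : ∀ j ∈ Finset.range (q + 1),
        ((a : ℝ) + 2 * ((q + 1 : ℕ) : ℝ) - 2 * ((j + 1 : ℕ) : ℝ)) * zkP (a - 1) (q + 1 - (j + 1)) r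
          = ((a : ℝ) + 2 * q - 2 * j) * zkP (a - 1) (q - j) r := by
      intro j hj
      rw [show q + 1 - (j + 1) = q - j by omega]
      push_cast
      ring
    have e2 : ∀ j ∈ Finset.range q,
        ((a : ℝ) + 2 * ((q + 1 : ℕ) : ℝ) - 2 * ((j + 1 : ℕ) : ℝ)) * zkP (a + 1) (q + 1 - 1 - (j + 1)) r
          = ((a : ℝ) + 2 * q - 2 * j) * zkP (a + 1) (q - 1 - j) r := by
      intro j hj
      rw [show q + 1 - 1 - (j + 1) = q - 1 - j by omega]
      push_cast
      ring
    rw [Finset.sum_congr rfl e1, Finset.sum_congr rfl e2,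
      show q + 1 - 0 = q + 1 by omega, show q + 1 - 1 - 0 = q by omega]
    push_cast
    ring

lemma L0 (r : ℝ) : ∀ q,
    zkD 0 q r = 2 * ∑ j ∈ Finset.range q, (2 * (q : ℝ) - 2 * j) * zkP 1 (q - 1 - j) r := by
  intro q
  induction q with
  | zero => simp [zkD]
  | succ q ih =>
    rw [key0 q r, ih,
      Finset.sum_range_succ'
        (fun j => (2 * ((q + 1 : ℕ) : ℝ) - 2 * (j : ℝ)) * zkP 1 (q + 1 - 1 - j) r) q]
    have e1 : ∀ j ∈ Finset.range q,
        (2 * ((q + 1 : ℕ) : ℝ) - 2 * ((j + 1 : ℕ) : ℝ)) * zkP 1 (q + 1 - 1 - (j + 1)) r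
          = (2 * (q : ℝ) - 2 * j) * zkP 1 (q - 1 - j) r := by
      intro j hj
      rw [show q + 1 - 1 - (j + 1) = q - 1 - j by omega]
      push_cast
      ring
    rw [Finset.sum_congr rfl e1, show q + 1 - 1 - 0 = q by omega]
    push_cast
    ring

theorem radialPoly_symm (m : ℕ) (l : ℤ) : radialPoly m l = radialPoly m (-l) := by
  funext r; rw [radialPoly, radialPoly, Int.natAbs_neg]

theorem main_nonneg (m : ℕ) (l : ℤ) (hm : 1 ≤ m) (hl : 0 ≤ l)
    (hlm : l.natAbs ≤ m) (he : Even (m - l.natAbs)) (r : ℝ) :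
    deriv (radialPoly m l) r =
      (∑ j ∈ Finset.range ((m - 1 - (l - 1).natAbs) / 2 + 1),
          ((m : ℝ) - 2 * j) * radialPoly (m - 1 - 2 * j) (l - 1) r) +
        ∑ j ∈ Finset.range ((m - 1 - (l + 1).natAbs) / 2 + 1),
          ((m : ℝ) - 2 * j) * radialPoly (m - 1 - 2 * j) (l + 1) r := by
  obtain ⟨q, hq⟩ : ∃ q, m = l.natAbs + 2 * q := by
    obtain ⟨c, hc⟩ := he; exact ⟨c, by omega⟩
  rcases eq_or_lt_of_le hl with hl0 | hpos
  · obtain rfl : l = 0 := hl0.symm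
    rw [show (0 : ℤ).natAbs = 0 from rfl, zero_add] at hq
    subst hq
    have hq1 : 1 ≤ q := by omega
    have hfun : radialPoly (2 * q) 0 = zkP 0 q := by
      have h := radialPoly_eq_P 0 0 q rfl
      rwa [zero_add] at h
    rw [hfun, deriv_zkP, L0 r q]
    have s1 : ∑ j ∈ Finset.range ((2 * q - 1 - ((0 : ℤ) - 1).natAbs) / 2 + 1),
          (((2 * q : ℕ) : ℝ) - 2 * j) * radialPoly (2 * q - 1 - 2 * j) (0 - 1) r
        = ∑ j ∈ Finset.range q, (2 * (q : ℝ) - 2 * j) * zkP 1 (q - 1 - j) r := by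
      refine Finset.sum_congr (by congr 1; rw [show ((0 : ℤ) - 1).natAbs = 1 from rfl]; omega)
        fun j hj => ?_
      have hj' : j < q := Finset.mem_range.mp hj
      have hrw : radialPoly (2 * q - 1 - 2 * j) (0 - 1) = zkP 1 (q - 1 - j) := by
        have h := radialPoly_eq_P (0 - 1) 1 (q - 1 - j) rfl
        rw [show 2 * q - 1 - 2 * j = 1 + 2 * (q - 1 - j) by omega]
        exact h
      rw [hrw]
      push_cast
      ring
    have s2 : ∑ j ∈ Finset.range ((2 * q - 1 - ((0 : ℤ) + 1).natAbs) / 2 + 1),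
          (((2 * q : ℕ) : ℝ) - 2 * j) * radialPoly (2 * q - 1 - 2 * j) (0 + 1) r
        = ∑ j ∈ Finset.range q, (2 * (q : ℝ) - 2 * j) * zkP 1 (q - 1 - j) r := by
      refine Finset.sum_congr (by congr 1; rw [show ((0 : ℤ) + 1).natAbs = 1 from rfl]; omega)
        fun j hj => ?_
      have hj' : j < q := Finset.mem_range.mp hj
      have hrw : radialPoly (2 * q - 1 - 2 * j) (0 + 1) = zkP 1 (q - 1 - j) := by
        have h := radialPoly_eq_P (0 + 1) 1 (q - 1 - j) rfl
        rw [show 2 * q - 1 - 2 * j = 1 + 2 * (q - 1 - j) by omega]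
        exact h
      rw [hrw]
      push_cast
      ring
    rw [s1, s2]
    ring
  · obtain ⟨n, rfl⟩ : ∃ n : ℕ, l = (n : ℤ) + 1 := ⟨(l - 1).toNat, by omega⟩
    have hna : ((n : ℤ) + 1).natAbs = n + 1 := by omega
    rw [hna] at hq
    subst hq
    have hfun : radialPoly (n + 1 + 2 * q) ((n : ℤ) + 1) = zkP (n + 1) q :=
      radialPoly_eq_P _ _ q hna
    rw [hfun, deriv_zkP, L1 (n + 1) (by omega) r q]
    have s1 : ∑ j ∈ Finset.range ((n + 1 + 2 * q - 1 - ((n : ℤ) + 1 - 1).natAbs) / 2 + 1),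
          (((n + 1 + 2 * q : ℕ) : ℝ) - 2 * j) * radialPoly (n + 1 + 2 * q - 1 - 2 * j)
            ((n : ℤ) + 1 - 1) r
        = ∑ j ∈ Finset.range (q + 1),
            (((n + 1 : ℕ) : ℝ) + 2 * q - 2 * j) * zkP (n + 1 - 1) (q - j) r := by
      refine Finset.sum_congr (by congr 1; omega) fun j hj => ?_
      have hj' : j < q + 1 := Finset.mem_range.mp hj
      have hrw : radialPoly (n + 1 + 2 * q - 1 - 2 * j) ((n : ℤ) + 1 - 1) = zkP n (q - j) := by
        have h := radialPoly_eq_P ((n : ℤ) + 1 - 1) n (q - j) (by omega)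
        rw [show n + 1 + 2 * q - 1 - 2 * j = n + 2 * (q - j) by omega]
        exact h
      rw [hrw, show n + 1 - 1 = n by omega]
      push_cast
      ring
    rcases Nat.eq_zero_or_pos q with rfl | hq1
    · have s2 : ∑ j ∈ Finset.range ((n + 1 + 2 * 0 - 1 - ((n : ℤ) + 1 + 1).natAbs) / 2 + 1),
            (((n + 1 + 2 * 0 : ℕ) : ℝ) - 2 * j) * radialPoly (n + 1 + 2 * 0 - 1 - 2 * j)
              ((n : ℤ) + 1 + 1) r = 0 := by
        rw [show (n + 1 + 2 * 0 - 1 - ((n : ℤ) + 1 + 1).natAbs) / 2 + 1 = 1 by omega,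
          Finset.sum_range_one,
          radialPoly_zero (n + 1 + 2 * 0 - 1 - 2 * 0) ((n : ℤ) + 1 + 1) (by omega)]
        simp
      rw [s1, s2]
      simp
    · have s2 : ∑ j ∈ Finset.range ((n + 1 + 2 * q - 1 - ((n : ℤ) + 1 + 1).natAbs) / 2 + 1),
            (((n + 1 + 2 * q : ℕ) : ℝ) - 2 * j) * radialPoly (n + 1 + 2 * q - 1 - 2 * j)
              ((n : ℤ) + 1 + 1) r
          = ∑ j ∈ Finset.range q,
              (((n + 1 : ℕ) : ℝ) + 2 * q - 2 * j) * zkP (n + 1 + 1) (q - 1 - j) r := by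
        refine Finset.sum_congr (by congr 1; omega) fun j hj => ?_
        have hj' : j < q := Finset.mem_range.mp hj
        have hrw : radialPoly (n + 1 + 2 * q - 1 - 2 * j) ((n : ℤ) + 1 + 1)
            = zkP (n + 2) (q - 1 - j) := by
          have h := radialPoly_eq_P ((n : ℤ) + 1 + 1) (n + 2) (q - 1 - j) (by omega)
          rw [show n + 1 + 2 * q - 1 - 2 * j = n + 2 + 2 * (q - 1 - j) by omega]
          exact h
        rw [hrw, show n + 1 + 1 = n + 2 from rfl]
        push_cast
        ring
      rw [s1, s2]

/-- Derivative expansion of the radial polynomials. -/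
theorem radialPoly_deriv_expansion (m : ℕ) (l : ℤ) (hm : 1 ≤ m)
    (hlm : l.natAbs ≤ m) (he : Even (m - l.natAbs)) (r : ℝ) :
    deriv (radialPoly m l) r =
      (∑ j ∈ Finset.range ((m - 1 - (l - 1).natAbs) / 2 + 1),
          ((m : ℝ) - 2 * j) * radialPoly (m - 1 - 2 * j) (l - 1) r) +
        ∑ j ∈ Finset.range ((m - 1 - (l + 1).natAbs) / 2 + 1),
          ((m : ℝ) - 2 * j) * radialPoly (m - 1 - 2 * j) (l + 1) r := by
  rcases le_or_gt 0 l with hl | hl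
  · exact main_nonneg m l hm hl hlm he r
  · have h1 : radialPoly m l = radialPoly m (-l) := radialPoly_symm m l
    have h2 : (-l).natAbs = l.natAbs := by omega
    have := main_nonneg m (-l) hm (by omega) (by omega) (by rwa [h2]) r
    rw [h1, this]
    have e1 : ∀ n : ℕ, radialPoly n (-l - 1) = radialPoly n (l + 1) := by
      intro n; rw [radialPoly_symm n (-l - 1), show -(-l - 1) = l + 1 by ring]
    have e2 : ∀ n : ℕ, radialPoly n (-l + 1) = radialPoly n (l - 1) := by
      intro n; rw [radialPoly_symm n (-l + 1), show -(-l + 1) = l - 1 by ring]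
    have e3 : (-l - 1).natAbs = (l + 1).natAbs := by omega
    have e4 : (-l + 1).natAbs = (l - 1).natAbs := by omega
    rw [add_comm]
    congr 1
    · refine Finset.sum_congr (by rw [e4]) fun j hj => by rw [e2]
    · refine Finset.sum_congr (by rw [e3]) fun j hj => by rw [e1]
end

section
/- For every k ∈ ℕ₀ and every admissible index pair (l,m), the k-th derivative of the radial polynomial satisfies sup_{0 ≤ r ≤ 1} |dᵏ/drᵏ R_m^{|l|}(r)| ≤ m^{2k} (for k ≥ 1; for k = 0 the bound is 1). -/
namespace ZernAux

open Polynomial Finset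

noncomputable def ell1 (c s : ℝ) : ℝ[X] := C c * X + C s
noncomputable def ell2 (c s : ℝ) : ℝ[X] := C c - C s * X
noncomputable def ff (c s : ℝ) (p q : ℕ) : ℝ[X] := ell1 c s ^ p * ell2 c s ^ q

noncomputable def BB (n : ℕ) (g h : ℝ[X]) : ℝ :=
  ∑ i ∈ Finset.range (n + 1),
    g.coeff i * h.coeff i * (Nat.factorial i : ℝ) * (Nat.factorial (n - i) : ℝ)

noncomputable def Lop (c s : ℝ) (ν : ℕ) (h : ℝ[X]) : ℝ[X] :=
  C c * derivative h + C s * (C (ν : ℝ) * h - X * derivative h)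

noncomputable def L2op (c s : ℝ) (ν : ℕ) (h : ℝ[X]) : ℝ[X] :=
  -(C s * derivative h) + C c * (C (ν : ℝ) * h - X * derivative h)

lemma BB_comm (n : ℕ) (g h : ℝ[X]) : BB n g h = BB n h g := by
  unfold BB; exact Finset.sum_congr rfl fun i _ => by ring

lemma BB_C_mul_right (n : ℕ) (a : ℝ) (g h : ℝ[X]) : BB n g (C a * h) = a * BB n g h := by
  unfold BB; rw [Finset.mul_sum]
  exact Finset.sum_congr rfl fun i _ => by rw [coeff_C_mul]; ring

lemma BB_add_right (n : ℕ) (g h₁ h₂ : ℝ[X]) : BB n g (h₁ + h₂) = BB n g h₁ + BB n g h₂ := by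
  unfold BB; rw [← Finset.sum_add_distrib]
  exact Finset.sum_congr rfl fun i _ => by rw [coeff_add]; ring

lemma coeff_X_mul_derivative (h : ℝ[X]) (i : ℕ) :
    (X * derivative h).coeff i = i * h.coeff i := by
  cases i with
  | zero => simp [Polynomial.mul_coeff_zero]
  | succ j => rw [coeff_X_mul, coeff_derivative]; push_cast; ring

lemma adjX (n : ℕ) (g h : ℝ[X]) : BB (n + 1) (X * g) h = BB n g (derivative h) := by
  unfold BB
  rw [Finset.sum_range_succ']
  have h0 : (X * g).coeff 0 * h.coeff 0 * (Nat.factorial 0 : ℝ) * (Nat.factorial (n + 1 - 0) : ℝ) = 0 := by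
    simp [Polynomial.mul_coeff_zero]
  rw [h0, add_zero]
  refine Finset.sum_congr rfl fun i _ => ?_
  rw [coeff_X_mul, coeff_derivative, Nat.succ_sub_succ, Nat.factorial_succ]
  push_cast; ring

lemma adjC (n : ℕ) (g h : ℝ[X]) (hg : g.coeff (n + 1) = 0) :
    BB (n + 1) g h = BB n g (C ((n : ℝ) + 1) * h - X * derivative h) := by
  unfold BB
  rw [Finset.sum_range_succ, hg]
  simp only [zero_mul, add_zero]
  refine Finset.sum_congr rfl fun i hi => ?_
  have hin : i ≤ n := Nat.lt_succ_iff.mp (Finset.mem_range.mp hi)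
  rw [coeff_sub, coeff_C_mul, coeff_X_mul_derivative]
  have : n + 1 - i = (n - i) + 1 := by omega
  rw [this, Nat.factorial_succ]
  have : ((n - i : ℕ) : ℝ) = (n : ℝ) - (i : ℝ) := by
    rw [Nat.cast_sub hin]
  push_cast [this]
  ring

lemma adj1 (c s : ℝ) (n : ℕ) (g h : ℝ[X]) (hg : g.natDegree ≤ n) :
    BB (n + 1) (ell1 c s * g) h = BB n g (Lop c s (n + 1) h) := by
  have hsplit : ell1 c s * g = C c * (X * g) + C s * g := by unfold ell1; ring
  have hgc : g.coeff (n + 1) = 0 :=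
    coeff_eq_zero_of_natDegree_lt (lt_of_le_of_lt hg (Nat.lt_succ_self n))
  rw [hsplit, BB_comm, BB_add_right, BB_C_mul_right, BB_C_mul_right, BB_comm _ _ (X * g),
    BB_comm _ _ g, adjX, adjC n g h hgc]
  unfold Lop
  rw [BB_add_right, BB_C_mul_right, BB_C_mul_right]
  push_cast
  ring

lemma adj2 (c s : ℝ) (n : ℕ) (g h : ℝ[X]) (hg : g.natDegree ≤ n) :
    BB (n + 1) (ell2 c s * g) h = BB n g (L2op c s (n + 1) h) := by
  have hsplit : ell2 c s * g = C (-s) * (X * g) + C c * g := by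
    unfold ell2; rw [map_neg]; ring
  have hgc : g.coeff (n + 1) = 0 :=
    coeff_eq_zero_of_natDegree_lt (lt_of_le_of_lt hg (Nat.lt_succ_self n))
  rw [hsplit, BB_comm, BB_add_right, BB_C_mul_right, BB_C_mul_right, BB_comm _ _ (X * g),
    BB_comm _ _ g, adjX, adjC n g h hgc]
  unfold L2op
  rw [← neg_mul, ← map_neg, BB_add_right, BB_C_mul_right, BB_C_mul_right]
  push_cast
  ring

lemma comm1 (c s : ℝ) (ν : ℕ) (h : ℝ[X]) :
    Lop c s (ν + 1) (ell1 c s * h) = ell1 c s * Lop c s ν h + C (c ^ 2 + s ^ 2) * h := by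
  unfold Lop ell1
  simp only [derivative_mul, derivative_add, derivative_C_mul, derivative_C, derivative_X,
    Nat.cast_add, Nat.cast_one, map_add, map_pow, map_one, C_add, C_1]
  ring

lemma comm2 (c s : ℝ) (ν : ℕ) (h : ℝ[X]) :
    Lop c s (ν + 1) (ell2 c s * h) = ell2 c s * Lop c s ν h := by
  unfold Lop ell2
  simp only [derivative_mul, derivative_sub, derivative_C_mul, derivative_C, derivative_X,
    Nat.cast_add, Nat.cast_one, C_add, C_1]
  ring

lemma comm3 (c s : ℝ) (ν : ℕ) (h : ℝ[X]) :
    L2op c s (ν + 1) (ell1 c s * h) = ell1 c s * L2op c s ν h := by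
  unfold L2op ell1
  simp only [derivative_mul, derivative_add, derivative_C_mul, derivative_C, derivative_X,
    Nat.cast_add, Nat.cast_one, C_add, C_1]
  ring

lemma comm4 (c s : ℝ) (ν : ℕ) (h : ℝ[X]) :
    L2op c s (ν + 1) (ell2 c s * h) = ell2 c s * L2op c s ν h + C (c ^ 2 + s ^ 2) * h := by
  unfold L2op ell2
  simp only [derivative_mul, derivative_sub, derivative_C_mul, derivative_C, derivative_X,
    Nat.cast_add, Nat.cast_one, map_add, map_pow, map_one, C_add, C_1]
  ring

lemma ff_succ_left (c s : ℝ) (p q : ℕ) : ff c s (p + 1) q = ell1 c s * ff c s p q := by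
  unfold ff; rw [pow_succ]; ring

lemma ff_succ_right (c s : ℝ) (q : ℕ) : ff c s 0 (q + 1) = ell2 c s * ff c s 0 q := by
  unfold ff; rw [pow_succ]; ring

lemma ff_zero_zero (c s : ℝ) : ff c s 0 0 = 1 := by unfold ff; simp

lemma natDegree_ff_le (c s : ℝ) (p q : ℕ) : (ff c s p q).natDegree ≤ p + q := by
  unfold ff
  refine natDegree_mul_le.trans (add_le_add ?_ ?_)
  · refine natDegree_pow_le.trans ?_
    have : (ell1 c s).natDegree ≤ 1 := natDegree_linear_le
    calc p * (ell1 c s).natDegree ≤ p * 1 := Nat.mul_le_mul_left p this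
    _ = p := Nat.mul_one p
  · refine natDegree_pow_le.trans ?_
    have h2 : ell2 c s = C (-s) * X + C c := by unfold ell2; rw [map_neg]; ring
    have : (ell2 c s).natDegree ≤ 1 := by rw [h2]; exact natDegree_linear_le
    calc q * (ell2 c s).natDegree ≤ q * 1 := Nat.mul_le_mul_left q this
    _ = q := Nat.mul_one q

lemma Lop_ff_zero (c s : ℝ) (q : ℕ) : Lop c s q (ff c s 0 q) = 0 := by
  induction q with
  | zero => unfold Lop; rw [ff_zero_zero]; simp
  | succ q ih => rw [ff_succ_right, comm2, ih, mul_zero]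

lemma Lop_ff (c s : ℝ) (hcs : c ^ 2 + s ^ 2 = 1) (p q : ℕ) :
    Lop c s (p + 1 + q) (ff c s (p + 1) q) = C ((p : ℝ) + 1) * ff c s p q := by
  induction p with
  | zero =>
    have h : (0 + 1 + q) = q + 1 := by omega
    rw [h, ff_succ_left, comm1, Lop_ff_zero, mul_zero, zero_add, hcs]
    norm_num
  | succ p ih =>
    have h : (p + 1 + 1 + q) = (p + 1 + q) + 1 := by omega
    rw [h, ff_succ_left, comm1, ih, hcs, mul_left_comm, ← ff_succ_left, ← add_mul, ← C_add]
    push_cast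
    ring_nf

lemma L2op_ff_zeroq (c s : ℝ) (p : ℕ) : L2op c s p (ff c s p 0) = 0 := by
  induction p with
  | zero => unfold L2op; rw [ff_zero_zero]; simp
  | succ p ih => rw [ff_succ_left, comm3, ih, mul_zero]

lemma L2op_ff (c s : ℝ) (hcs : c ^ 2 + s ^ 2 = 1) (p q : ℕ) :
    L2op c s (p + (q + 1)) (ff c s p (q + 1)) = C ((q : ℝ) + 1) * ff c s p q := by
  induction p with
  | zero =>
    induction q with
    | zero =>
      rw [show (0 + (0 + 1)) = 0 + 1 from rfl, ff_succ_right, comm4, L2op_ff_zeroq, mul_zero,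
        zero_add, hcs]
      norm_num
    | succ q ihq =>
      rw [show (0 + (q + 1 + 1)) = (0 + (q + 1)) + 1 by omega, ff_succ_right, comm4, ihq, hcs,
        mul_left_comm, ← ff_succ_right, ← add_mul, ← C_add]
      push_cast
      ring_nf
  | succ p ih =>
    have h : (p + 1 + (q + 1)) = (p + (q + 1)) + 1 := by omega
    rw [h, ff_succ_left, comm3, ih, mul_left_comm, ← ff_succ_left]

lemma parseval (c s : ℝ) (hcs : c ^ 2 + s ^ 2 = 1) (p q : ℕ) :
    BB (p + q) (ff c s p q) (ff c s p q) =
      (Nat.factorial p : ℝ) * (Nat.factorial q : ℝ) := by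
  induction p with
  | zero =>
    induction q with
    | zero => rw [ff_zero_zero]; unfold BB; simp
    | succ q ihq =>
      have hdeg : (ff c s 0 q).natDegree ≤ q := by simpa using natDegree_ff_le c s 0 q
      have h1 : BB (0 + (q + 1)) (ff c s 0 (q + 1)) (ff c s 0 (q + 1)) =
          BB q (ff c s 0 q) (L2op c s (q + 1) (ff c s 0 (q + 1))) := by
        rw [show (0 + (q + 1)) = q + 1 by omega]
        conv_lhs => rw [ff_succ_right]
        rw [adj2 c s q _ _ hdeg, ← ff_succ_right]
      have h2 : L2op c s (q + 1) (ff c s 0 (q + 1)) = C ((q : ℝ) + 1) * ff c s 0 q := by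
        have := L2op_ff c s hcs 0 q
        rwa [show (0 + (q + 1)) = q + 1 by omega] at this
      rw [h1, h2, BB_C_mul_right]
      rw [show (0 + q) = q by omega] at ihq
      rw [ihq, Nat.factorial_succ]
      push_cast
      ring
  | succ p ih =>
    have hdeg : (ff c s p q).natDegree ≤ p + q := natDegree_ff_le c s p q
    have h1 : BB (p + 1 + q) (ff c s (p + 1) q) (ff c s (p + 1) q) =
        BB (p + q) (ff c s p q) (Lop c s (p + q + 1) (ff c s (p + 1) q)) := by
      rw [show (p + 1 + q) = (p + q) + 1 by omega]
      conv_lhs => rw [ff_succ_left]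
      rw [adj1 c s (p + q) _ _ hdeg, ← ff_succ_left]
    have h2 : Lop c s (p + q + 1) (ff c s (p + 1) q) = C ((p : ℝ) + 1) * ff c s p q := by
      have := Lop_ff c s hcs p q
      rwa [show (p + 1 + q) = p + q + 1 by omega] at this
    rw [h1, h2, BB_C_mul_right, ih, Nat.factorial_succ]
    push_cast
    ring

lemma coeff_ff_abs_le_one (c s : ℝ) (hcs : c ^ 2 + s ^ 2 = 1) (p q : ℕ) :
    |(ff c s p q).coeff p| ≤ 1 := by
  have hpars := parseval c s hcs p q
  have hfac : (0 : ℝ) < (Nat.factorial p : ℝ) * (Nat.factorial q : ℝ) := by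
    positivity
  have hterm : ((ff c s p q).coeff p) ^ 2 * ((Nat.factorial p : ℝ) * (Nat.factorial q : ℝ)) ≤
      BB (p + q) (ff c s p q) (ff c s p q) := by
    unfold BB
    have hmem : p ∈ Finset.range (p + q + 1) := Finset.mem_range.mpr (by omega)
    have := Finset.single_le_sum
      (f := fun i => (ff c s p q).coeff i * (ff c s p q).coeff i *
        (Nat.factorial i : ℝ) * (Nat.factorial (p + q - i) : ℝ))
      (fun i _ => mul_nonneg (mul_nonneg (mul_self_nonneg _) (by positivity)) (by positivity)) hmem
    calc ((ff c s p q).coeff p) ^ 2 * ((Nat.factorial p : ℝ) * (Nat.factorial q : ℝ))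
        = (ff c s p q).coeff p * (ff c s p q).coeff p *
          (Nat.factorial p : ℝ) * (Nat.factorial (p + q - p) : ℝ) := by
          rw [show p + q - p = q by omega]; ring
      _ ≤ _ := this
  rw [hpars] at hterm
  have hsq : ((ff c s p q).coeff p) ^ 2 ≤ 1 := by
    by_contra hlt
    push_neg at hlt
    nlinarith
  exact (sq_le_one_iff_abs_le_one _).mp hsq

lemma coeff_linear_pow (a b : ℝ) (n i : ℕ) :
    ((C a * X + C b) ^ n).coeff i = (n.choose i : ℝ) * a ^ i * b ^ (n - i) := by
  rw [add_pow, finset_sum_coeff]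
  have hterm : ∀ k, ((C a * X) ^ k * C b ^ (n - k) * (n.choose k : ℝ[X])).coeff i
      = if k = i then (n.choose k : ℝ) * a ^ k * b ^ (n - k) else 0 := by
    intro k
    rw [mul_pow, ← C_pow, ← C_pow, ← C_eq_natCast, coeff_mul_C, coeff_mul_C,
      mul_comm (C (a ^ k)) (X ^ k), coeff_mul_C, coeff_X_pow]
    by_cases h : k = i
    · subst h; simp; ring
    · have : ¬ (i = k) := fun hh => h hh.symm
      simp [this, h]
  rw [Finset.sum_congr rfl fun k _ => hterm k, Finset.sum_ite_eq' (Finset.range (n + 1)) i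
    (fun k => (n.choose k : ℝ) * a ^ k * b ^ (n - k))]
  split_ifs with h
  · rfl
  · have : n < i := by
      have := Finset.mem_range.not.mp h
      omega
    rw [Nat.choose_eq_zero_of_lt this]
    simp

lemma coeff_ell1_pow (c s : ℝ) (n i : ℕ) :
    ((ell1 c s) ^ n).coeff i = (n.choose i : ℝ) * c ^ i * s ^ (n - i) :=
  coeff_linear_pow c s n i

lemma coeff_ell2_pow (c s : ℝ) (n i : ℕ) :
    ((ell2 c s) ^ n).coeff i = (n.choose i : ℝ) * (-s) ^ i * c ^ (n - i) := by
  have h2 : ell2 c s = C (-s) * X + C c := by unfold ell2; rw [map_neg]; ring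
  rw [h2]
  exact coeff_linear_pow (-s) c n i

lemma coeff_ff_eq_sum (c s : ℝ) (p q : ℕ) (hqp : q ≤ p) :
    (ff c s p q).coeff p =
      ∑ k ∈ Finset.range (q + 1),
        (-1 : ℝ) ^ k * (p.choose k : ℝ) * (q.choose k : ℝ) * c ^ (p + q - 2 * k) * (s ^ 2) ^ k := by
  rw [ff, mul_comm, coeff_mul, Finset.Nat.sum_antidiagonal_eq_sum_range_succ_mk]
  rw [show ∑ k ∈ Finset.range (p + 1), ((ell2 c s) ^ q).coeff k * ((ell1 c s) ^ p).coeff (p - k)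
      = ∑ k ∈ Finset.range (p + 1), ((q.choose k : ℝ) * (-s) ^ k * c ^ (q - k)) *
          ((p.choose (p - k) : ℝ) * c ^ (p - k) * s ^ (p - (p - k))) from
    Finset.sum_congr rfl fun k _ => by rw [coeff_ell1_pow, coeff_ell2_pow]]
  rw [← Finset.sum_subset (Finset.range_subset_range.mpr (by omega : q + 1 ≤ p + 1))
    (fun k _ hk => by
      have : q < k := by
        have := Finset.mem_range.not.mp hk
        omega
      rw [Nat.choose_eq_zero_of_lt this]
      simp)]
  refine Finset.sum_congr rfl fun k hk => ?_
  have hkq : k ≤ q := Nat.lt_succ_iff.mp (Finset.mem_range.mp hk)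
  have h1 : p - (p - k) = k := by omega
  have h2 : p.choose (p - k) = p.choose k := Nat.choose_symm (by omega)
  have h3 : c ^ (q - k) * c ^ (p - k) = c ^ (p + q - 2 * k) := by
    rw [← pow_add]
    congr 1
    omega
  have h4 : (-s) ^ k = (-1 : ℝ) ^ k * s ^ k := by
    rw [neg_pow]
  have h5 : (s ^ 2) ^ k = s ^ k * s ^ k := by
    rw [← pow_mul]
    rw [show 2 * k = k + k by omega, pow_add]
  rw [h1, h2, h4, h5]
  calc (q.choose k : ℝ) * ((-1:ℝ) ^ k * s ^ k) * c ^ (q - k) *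
        ((p.choose k : ℝ) * c ^ (p - k) * s ^ k)
      = (-1:ℝ) ^ k * (p.choose k : ℝ) * (q.choose k : ℝ) * (c ^ (q - k) * c ^ (p - k)) *
        (s ^ k * s ^ k) := by ring
    _ = _ := by rw [h3]

lemma choose_sum_ident (p q j : ℕ) (hj : j ≤ q) (hqp : q ≤ p) :
    ∑ k ∈ Finset.Icc j q, p.choose k * q.choose k * k.choose (k - j)
      = p.choose j * (p + q - j).choose (q - j) := by
  have step1 : ∀ k ∈ Finset.Icc j q, p.choose k * q.choose k * k.choose (k - j)
      = q.choose k * (p.choose j * (p - j).choose (k - j)) := by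
    intro k hk
    obtain ⟨h1, h2⟩ := Finset.mem_Icc.mp hk
    rw [Nat.choose_symm h1, mul_comm (p.choose k) (q.choose k), mul_assoc,
      Nat.choose_mul h1]
  rw [Finset.sum_congr rfl step1]
  have step2 : ∑ k ∈ Finset.Icc j q, q.choose k * (p.choose j * (p - j).choose (k - j))
      = p.choose j * ∑ u ∈ Finset.range (q - j + 1), (p - j).choose u * q.choose (q - j - u) := by
    rw [Finset.mul_sum]
    refine Finset.sum_nbij' (fun k => k - j) (fun u => u + j) ?_ ?_ ?_ ?_ ?_
    · intro k hk
      obtain ⟨h1, h2⟩ := Finset.mem_Icc.mp hk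
      exact Finset.mem_range.mpr (by omega)
    · intro u hu
      have := Finset.mem_range.mp hu
      exact Finset.mem_Icc.mpr (by omega)
    · intro k hk; obtain ⟨h1, h2⟩ := Finset.mem_Icc.mp hk; omega
    · intro u hu; have := Finset.mem_range.mp hu; omega
    · intro k hk
      obtain ⟨h1, h2⟩ := Finset.mem_Icc.mp hk
      have hsym : q.choose k = q.choose (q - j - (k - j)) := by
        rw [show q - j - (k - j) = q - k by omega, Nat.choose_symm h2]
      rw [hsym]
      ring
  rw [step2]
  congr 1
  have hvand := Nat.add_choose_eq (p - j) q (q - j)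
  rw [Finset.Nat.sum_antidiagonal_eq_sum_range_succ_mk] at hvand
  rw [show p + q - j = p - j + q by omega, hvand]

lemma fact_ident (p q j : ℕ) (hj : j ≤ q) (hqp : q ≤ p) :
    p.choose j * (p + q - j).choose (q - j) *
      (j.factorial * (p - j).factorial * (q - j).factorial) = (p + q - j).factorial := by
  have ha : p.choose j * j.factorial * (p - j).factorial = p.factorial :=
    Nat.choose_mul_factorial_mul_factorial (by omega)
  have hb : (p + q - j).choose (q - j) * (q - j).factorial * p.factorial
      = (p + q - j).factorial := by
    have := Nat.choose_mul_factorial_mul_factorial (show q - j ≤ p + q - j by omega)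
    rwa [show p + q - j - (q - j) = p by omega] at this
  calc p.choose j * (p + q - j).choose (q - j) *
        (j.factorial * (p - j).factorial * (q - j).factorial)
      = ((p + q - j).choose (q - j) * (q - j).factorial) *
        (p.choose j * j.factorial * (p - j).factorial) := by ring
    _ = ((p + q - j).choose (q - j) * (q - j).factorial) * p.factorial := by rw [ha]
    _ = (p + q - j).factorial := by rw [mul_assoc] at hb ⊢; exact hb

lemma sum_to_radial (p q : ℕ) (hqp : q ≤ p) (r : ℝ) :
    ∑ k ∈ Finset.range (q + 1),
        (-1 : ℝ) ^ k * (p.choose k : ℝ) * (q.choose k : ℝ) * r ^ (p + q - 2 * k)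
          * (1 - r ^ 2) ^ k
      = radialPolyAux (p + q) (p - q) r := by
  -- expand (1 - r^2)^k and reflect the inner sum
  have expand : ∀ k, k ≤ q → (1 - r ^ 2) ^ k
      = ∑ j ∈ Finset.range (q + 1),
          (if j ≤ k then (-(r ^ 2)) ^ (k - j) * (k.choose (k - j) : ℝ) else 0) := by
    intro k hk
    have h1 : (1 - r ^ 2) = (-(r ^ 2) + 1) := by ring
    rw [h1, add_pow]
    simp only [one_pow, mul_one]
    have h2 : ∑ t ∈ Finset.range (k + 1), (-(r ^ 2)) ^ t * (k.choose t : ℝ)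
        = ∑ j ∈ Finset.range (k + 1), (-(r ^ 2)) ^ (k - j) * (k.choose (k - j) : ℝ) := by
      have := Finset.sum_range_reflect
        (fun t => (-(r ^ 2)) ^ t * (k.choose t : ℝ)) (k + 1)
      rw [← this]
      exact Finset.sum_congr rfl fun j hj => by
        rw [show k + 1 - 1 - j = k - j by omega]
    rw [h2]
    have hext : ∑ j ∈ Finset.range (q + 1),
        (if j ≤ k then (-(r ^ 2)) ^ (k - j) * (k.choose (k - j) : ℝ) else 0)
        = ∑ j ∈ Finset.range (k + 1), (-(r ^ 2)) ^ (k - j) * (k.choose (k - j) : ℝ) := by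
      rw [← Finset.sum_subset (Finset.range_subset_range.mpr (by omega : k + 1 ≤ q + 1))
        (fun x _ hx => by
          have hxk : ¬ (x ≤ k) := by
            have := Finset.mem_range.not.mp hx
            omega
          rw [if_neg hxk])]
      refine Finset.sum_congr rfl fun x hx => ?_
      have hxk : x ≤ k := Nat.lt_succ_iff.mp (Finset.mem_range.mp hx)
      rw [if_pos hxk]
    rw [hext]
  rw [Finset.sum_congr rfl fun k hk => by
    rw [expand k (Nat.lt_succ_iff.mp (Finset.mem_range.mp hk)), Finset.mul_sum]]
  rw [Finset.sum_comm]
  -- now inner sum over k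
  have hfilter : ∀ j : ℕ, j ≤ q → ∀ F : ℕ → ℝ,
      ∑ k ∈ Finset.range (q + 1), (if j ≤ k then F k else 0) = ∑ k ∈ Finset.Icc j q, F k := by
    intro j hj F
    rw [Finset.sum_ite, Finset.sum_const_zero, add_zero]
    congr 1
    ext k
    simp only [Finset.mem_filter, Finset.mem_range, Finset.mem_Icc]
    omega
  -- compute RHS index normalizations
  have hr1 : (p + q - (p - q)) / 2 = q := by omega
  have hr2 : (p + q + (p - q)) / 2 = p := by omega
  rw [radialPolyAux, hr1, hr2]
  refine Finset.sum_congr rfl fun j hj => ?_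
  have hjq : j ≤ q := Nat.lt_succ_iff.mp (Finset.mem_range.mp hj)
  -- push the ite inside the product into standard form
  have step : ∀ k, (-1 : ℝ) ^ k * (p.choose k : ℝ) * (q.choose k : ℝ) * r ^ (p + q - 2 * k) *
      (if j ≤ k then (-(r ^ 2)) ^ (k - j) * (k.choose (k - j) : ℝ) else 0)
      = (if j ≤ k then (-1 : ℝ) ^ k * (p.choose k : ℝ) * (q.choose k : ℝ) * r ^ (p + q - 2 * k) *
          ((-(r ^ 2)) ^ (k - j) * (k.choose (k - j) : ℝ)) else 0) := by
    intro k
    split_ifs with h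
    · rfl
    · rw [mul_zero]
  rw [Finset.sum_congr rfl fun k _ => step k, hfilter j hjq]
  have term : ∀ k ∈ Finset.Icc j q,
      (-1 : ℝ) ^ k * (p.choose k : ℝ) * (q.choose k : ℝ) * r ^ (p + q - 2 * k) *
          ((-(r ^ 2)) ^ (k - j) * (k.choose (k - j) : ℝ))
      = (-1 : ℝ) ^ j * r ^ (p + q - 2 * j) *
          ((p.choose k * q.choose k * k.choose (k - j) : ℕ) : ℝ) := by
    intro k hk
    obtain ⟨h1, h2⟩ := Finset.mem_Icc.mp hk
    have hsign : (-(r ^ 2) : ℝ) ^ (k - j) = (-1 : ℝ) ^ (k - j) * (r ^ 2) ^ (k - j) := by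
      rw [neg_pow]
    have hs2 : (-1 : ℝ) ^ k * (-1 : ℝ) ^ (k - j) = (-1 : ℝ) ^ j := by
      rw [← pow_add, show k + (k - j) = 2 * (k - j) + j by omega, pow_add, pow_mul]
      norm_num
    have hpow : r ^ (p + q - 2 * k) * (r ^ 2) ^ (k - j) = r ^ (p + q - 2 * j) := by
      rw [← pow_mul, ← pow_add]
      congr 1
      omega
    push_cast
    calc (-1 : ℝ) ^ k * (p.choose k : ℝ) * (q.choose k : ℝ) * r ^ (p + q - 2 * k) *
          ((-(r ^ 2)) ^ (k - j) * (k.choose (k - j) : ℝ))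
        = ((-1 : ℝ) ^ k * (-1 : ℝ) ^ (k - j)) * (r ^ (p + q - 2 * k) * (r ^ 2) ^ (k - j)) *
          ((p.choose k : ℝ) * (q.choose k : ℝ) * (k.choose (k - j) : ℝ)) := by
          rw [hsign]; ring
      _ = _ := by rw [hs2, hpow]
  rw [Finset.sum_congr rfl term, ← Finset.mul_sum, ← Nat.cast_sum,
    choose_sum_ident p q j hjq hqp]
  -- final coefficient identity
  have hfnz : ((j.factorial : ℝ) * ((p - j).factorial : ℝ) * ((q - j).factorial : ℝ)) ≠ 0 := by
    positivity
  have hcoef : ((p.choose j * (p + q - j).choose (q - j) : ℕ) : ℝ)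
      = ((p + q - j).factorial : ℝ) /
        ((j.factorial : ℝ) * ((p - j).factorial : ℝ) * ((q - j).factorial : ℝ)) := by
    rw [eq_div_iff hfnz]
    have := fact_ident p q j hjq hqp
    push_cast [← this]
    ring
  rw [hcoef]
  ring

lemma radialPolyAux_abs_le_one (m l : ℕ) (hlm : l ≤ m) (hpar : Even (m - l))
    {r : ℝ} (h0 : 0 ≤ r) (h1 : r ≤ 1) : |radialPolyAux m l r| ≤ 1 := by
  obtain ⟨t, ht⟩ := hpar
  have hm : m = (l + t) + t := by omega
  have hl : l = (l + t) - t := by omega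
  have hqp : t ≤ l + t := by omega
  set s : ℝ := Real.sqrt (1 - r ^ 2) with hs_def
  have hs : s ^ 2 = 1 - r ^ 2 := Real.sq_sqrt (by nlinarith)
  have hcs : r ^ 2 + s ^ 2 = 1 := by rw [hs]; ring
  have h2 := coeff_ff_abs_le_one r s hcs (l + t) t
  have h3 : (ff r s (l + t) t).coeff (l + t) = radialPolyAux m l r := by
    rw [coeff_ff_eq_sum r s (l + t) t hqp]
    rw [Finset.sum_congr rfl fun k _ => by rw [hs]]
    rw [sum_to_radial (l + t) t hqp r]
    rw [← hm, show l + t - t = l by omega]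
  rwa [h3] at h2

/-! ### Part 2: derivative recursion and the induction on the order -/

noncomputable def coefA (m l j : ℕ) : ℝ :=
  (-1 : ℝ) ^ j * (Nat.factorial (m - j) : ℝ) /
    ((Nat.factorial j : ℝ) * (Nat.factorial ((m + l) / 2 - j) : ℝ) *
      (Nat.factorial ((m - l) / 2 - j) : ℝ))

lemma radialPolyAux_eq (m l : ℕ) (r : ℝ) :
    radialPolyAux m l r = ∑ j ∈ Finset.range ((m - l) / 2 + 1), coefA m l j * r ^ (m - 2 * j) :=
  rfl

section
open Nat

lemma key_mid (m P Q u : ℕ) (rr : ℝ) (hm : m = P + Q) (hu : 1 ≤ u) (hQ : u + 1 ≤ Q)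
    (hPQ : Q ≤ P) :
    (-1:ℝ)^u * ((m-u)! : ℝ) / ((u ! : ℝ) * ((P-u)! : ℝ) * ((Q-u)! : ℝ)) * (((m - 2*u : ℕ) : ℝ) * rr)
    = (-1:ℝ)^(u-1) * ((m-1-u)! : ℝ) / (((u-1)! : ℝ) * ((P-u)! : ℝ) * ((Q-u)! : ℝ)) *
        (((m - 2*u : ℕ) : ℝ) * rr)
      + m * ((-1:ℝ)^u * ((m-1-u)! : ℝ) / ((u ! : ℝ) * ((P-1-u)! : ℝ) * ((Q-u)! : ℝ)) * rr)
      + m * ((-1:ℝ)^u * ((m-1-u)! : ℝ) / ((u ! : ℝ) * ((P-u)! : ℝ) * ((Q-1-u)! : ℝ)) * rr) := by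
  obtain ⟨a, ha1, ha2⟩ : ∃ a, m - u = a + 1 ∧ m - 1 - u = a := ⟨m - 1 - u, by omega, rfl⟩
  obtain ⟨c, hc1, hc2⟩ : ∃ c, P - u = c + 1 ∧ P - 1 - u = c := ⟨P - 1 - u, by omega, rfl⟩
  obtain ⟨d, hd1, hd2⟩ : ∃ d, Q - u = d + 1 ∧ Q - 1 - u = d := ⟨Q - 1 - u, by omega, rfl⟩
  obtain ⟨b, hb1, hb2⟩ : ∃ b, u = b + 1 ∧ u - 1 = b := ⟨u - 1, by omega, rfl⟩
  have hmc : (m : ℝ) = (a : ℝ) + (b : ℝ) + 2 := by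
    have : m = a + b + 2 := by omega
    rw [this]; push_cast; ring
  have hec : ((m - 2*u : ℕ) : ℝ) = (c : ℝ) + (d : ℝ) + 2 := by
    have : m - 2*u = c + d + 2 := by omega
    rw [this]; push_cast; ring
  rw [hec, hmc, ha2, hc2, hd2, hb2, ha1, hc1, hd1, hb1]
  have f1 : ((a+1)! : ℝ) = ((a:ℝ)+1) * (a ! : ℝ) := by rw [Nat.factorial_succ]; push_cast; ring
  have f2 : ((b+1)! : ℝ) = ((b:ℝ)+1) * (b ! : ℝ) := by rw [Nat.factorial_succ]; push_cast; ring
  have f3 : ((c+1)! : ℝ) = ((c:ℝ)+1) * (c ! : ℝ) := by rw [Nat.factorial_succ]; push_cast; ring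
  have f4 : ((d+1)! : ℝ) = ((d:ℝ)+1) * (d ! : ℝ) := by rw [Nat.factorial_succ]; push_cast; ring
  rw [f1, f2, f3, f4]
  have hb0 : (b ! : ℝ) ≠ 0 := by positivity
  have hc0 : (c ! : ℝ) ≠ 0 := by positivity
  have hd0 : (d ! : ℝ) ≠ 0 := by positivity
  have : ((b:ℝ)+1) ≠ 0 := by positivity
  have : ((c:ℝ)+1) ≠ 0 := by positivity
  have : ((d:ℝ)+1) ≠ 0 := by positivity
  field_simp
  ring

lemma key_u0 (m P Q : ℕ) (rr : ℝ) (hm : m = P + Q) (hP : 1 ≤ P) (hQ : 1 ≤ Q) :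
    (-1:ℝ)^0 * ((m-0)! : ℝ) / (((0:ℕ) ! : ℝ) * ((P-0)! : ℝ) * ((Q-0)! : ℝ)) *
        (((m - 2*0 : ℕ) : ℝ) * rr)
    = m * ((-1:ℝ)^0 * ((m-1-0)! : ℝ) / (((0:ℕ) ! : ℝ) * ((P-1-0)! : ℝ) * ((Q-0)! : ℝ)) * rr)
      + m * ((-1:ℝ)^0 * ((m-1-0)! : ℝ) / (((0:ℕ) ! : ℝ) * ((P-0)! : ℝ) * ((Q-1-0)! : ℝ)) * rr) := by
  obtain ⟨a, ha1, ha2⟩ : ∃ a, m - 0 = a + 1 ∧ m - 1 - 0 = a := ⟨m - 1, by omega, rfl⟩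
  obtain ⟨c, hc1, hc2⟩ : ∃ c, P - 0 = c + 1 ∧ P - 1 - 0 = c := ⟨P - 1, by omega, rfl⟩
  obtain ⟨d, hd1, hd2⟩ : ∃ d, Q - 0 = d + 1 ∧ Q - 1 - 0 = d := ⟨Q - 1, by omega, rfl⟩
  have hmc : (m : ℝ) = (c : ℝ) + (d : ℝ) + 2 := by
    have : m = c + d + 2 := by omega
    rw [this]; push_cast; ring
  have hec : ((m - 2*0 : ℕ) : ℝ) = (c : ℝ) + (d : ℝ) + 2 := by
    have : m - 2*0 = c + d + 2 := by omega
    rw [this]; push_cast; ring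
  have hac : ((a+1)! : ℝ) = ((c:ℝ) + (d:ℝ) + 2) * (a ! : ℝ) := by
    rw [Nat.factorial_succ]
    have : a + 1 = c + d + 2 := by omega
    push_cast [this]; ring
  rw [hec, hmc, ha2, hc2, hd2, ha1, hc1, hd1, hac]
  have f3 : ((c+1)! : ℝ) = ((c:ℝ)+1) * (c ! : ℝ) := by rw [Nat.factorial_succ]; push_cast; ring
  have f4 : ((d+1)! : ℝ) = ((d:ℝ)+1) * (d ! : ℝ) := by rw [Nat.factorial_succ]; push_cast; ring
  rw [f3, f4]
  have hc0 : (c ! : ℝ) ≠ 0 := by positivity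
  have hd0 : (d ! : ℝ) ≠ 0 := by positivity
  have : ((c:ℝ)+1) ≠ 0 := by positivity
  have : ((d:ℝ)+1) ≠ 0 := by positivity
  field_simp
  ring

lemma key_uQ (m P Q : ℕ) (rr : ℝ) (hm : m = P + Q) (hQ : 1 ≤ Q) (hPQ : Q + 1 ≤ P) :
    (-1:ℝ)^Q * ((m-Q)! : ℝ) / ((Q ! : ℝ) * ((P-Q)! : ℝ) * ((Q-Q)! : ℝ)) *
        (((m - 2*Q : ℕ) : ℝ) * rr)
    = (-1:ℝ)^(Q-1) * ((m-1-Q)! : ℝ) / (((Q-1)! : ℝ) * ((P-Q)! : ℝ) * ((Q-Q)! : ℝ)) *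
        (((m - 2*Q : ℕ) : ℝ) * rr)
      + m * ((-1:ℝ)^Q * ((m-1-Q)! : ℝ) / ((Q ! : ℝ) * ((P-1-Q)! : ℝ) * ((Q-Q)! : ℝ)) * rr) := by
  obtain ⟨a, ha1, ha2⟩ : ∃ a, m - Q = a + 1 ∧ m - 1 - Q = a := ⟨m - 1 - Q, by omega, rfl⟩
  obtain ⟨c, hc1, hc2⟩ : ∃ c, P - Q = c + 1 ∧ P - 1 - Q = c := ⟨P - 1 - Q, by omega, rfl⟩
  obtain ⟨b, hb1, hb2⟩ : ∃ b, Q = b + 1 ∧ Q - 1 = b := ⟨Q - 1, by omega, rfl⟩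
  have hmc : (m : ℝ) = (a : ℝ) + (b : ℝ) + 2 := by
    have : m = a + b + 2 := by omega
    rw [this]; push_cast; ring
  have hec : ((m - 2*Q : ℕ) : ℝ) = (c : ℝ) + 1 := by
    have : m - 2*Q = c + 1 := by omega
    rw [this]; push_cast; ring
  have hqq : Q - Q = 0 := by omega
  rw [hec, hmc, hqq, ha2, hc2, hb2, ha1, hc1, hb1]
  have f1 : ((a+1)! : ℝ) = ((a:ℝ)+1) * (a ! : ℝ) := by rw [Nat.factorial_succ]; push_cast; ring
  have f2 : ((b+1)! : ℝ) = ((b:ℝ)+1) * (b ! : ℝ) := by rw [Nat.factorial_succ]; push_cast; ring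
  have f3 : ((c+1)! : ℝ) = ((c:ℝ)+1) * (c ! : ℝ) := by rw [Nat.factorial_succ]; push_cast; ring
  rw [f1, f2, f3]
  have hb0 : (b ! : ℝ) ≠ 0 := by positivity
  have hc0 : (c ! : ℝ) ≠ 0 := by positivity
  have : ((b:ℝ)+1) ≠ 0 := by positivity
  have : ((c:ℝ)+1) ≠ 0 := by positivity
  field_simp
  ring

end

lemma hasDerivAt_radialPolyAux (m l : ℕ) (r : ℝ) :
    HasDerivAt (radialPolyAux m l)
      (∑ j ∈ Finset.range ((m - l) / 2 + 1),
        coefA m l j * (((m - 2 * j : ℕ) : ℝ) * r ^ (m - 2 * j - 1))) r := by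
  have : ∀ j ∈ Finset.range ((m - l) / 2 + 1),
      HasDerivAt (fun x : ℝ => coefA m l j * x ^ (m - 2 * j))
        (coefA m l j * (((m - 2 * j : ℕ) : ℝ) * r ^ (m - 2 * j - 1))) r := by
    intro j _
    exact (hasDerivAt_pow (m - 2 * j) r).const_mul (coefA m l j)
  exact HasDerivAt.fun_sum this

lemma deriv_radialPolyAux (m l : ℕ) (r : ℝ) :
    deriv (radialPolyAux m l) r
      = ∑ j ∈ Finset.range ((m - l) / 2 + 1),
          coefA m l j * (((m - 2 * j : ℕ) : ℝ) * r ^ (m - 2 * j - 1)) :=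
  (hasDerivAt_radialPolyAux m l r).deriv

lemma radialPoly_pos (m lN : ℕ) (h : lN ≤ m ∧ Even (m - lN)) :
    radialPoly m (lN : ℤ) = radialPolyAux m lN := by
  funext x
  simp only [radialPoly, Int.natAbs_natCast, if_pos h]

lemma radialPoly_negc (m : ℕ) (l : ℤ) (h : ¬(l.natAbs ≤ m ∧ Even (m - l.natAbs))) :
    radialPoly m l = fun _ => 0 :=
  funext fun _ => if_neg h

lemma natAbs_coe_sub_one (l : ℕ) (hl : 1 ≤ l) : ((l : ℤ) - 1).natAbs = l - 1 := by
  have h : ((l : ℤ) - 1) = ((l - 1 : ℕ) : ℤ) := by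
    push_cast [Nat.cast_sub hl]
    ring
  rw [h, Int.natAbs_natCast]

lemma natAbs_coe_add_one (l : ℕ) : ((l : ℤ) + 1).natAbs = l + 1 := by
  have h : ((l : ℤ) + 1) = ((l + 1 : ℕ) : ℤ) := by push_cast; ring
  rw [h, Int.natAbs_natCast]

lemma natAbs_zero_sub_one : (((0:ℕ) : ℤ) - 1).natAbs = 1 := by simp

lemma deriv_radialPoly (m : ℕ) (l : ℕ) (r : ℝ) :
    deriv (radialPoly m (l : ℤ)) r =
      deriv (radialPoly (m - 2) (l : ℤ)) r +
        m * (radialPoly (m - 1) ((l : ℤ) - 1) r + radialPoly (m - 1) ((l : ℤ) + 1) r) := by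
  by_cases hadm : l ≤ m ∧ Even (m - l)
  · obtain ⟨hlm, hev⟩ := hadm
    obtain ⟨t, ht⟩ := hev
    rcases Nat.eq_zero_or_pos t with ht0 | ht0
    · -- q = 0 : l = m
      subst ht0
      have hml : m = l := by omega
      subst hml
      rcases Nat.eq_zero_or_pos m with hm0 | hm0
      · subst hm0
        norm_num
      -- m = l ≥ 1
      have e1 : radialPoly m (m : ℤ) = radialPolyAux m m :=
        radialPoly_pos m m ⟨le_refl m, by simp⟩
      have e2 : radialPoly (m - 2) (m : ℤ) = fun _ => 0 :=
        radialPoly_negc _ _ (by rintro ⟨h1, -⟩; simp only [Int.natAbs_natCast] at h1; omega)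
      have e3 : radialPoly (m - 1) ((m : ℤ) + 1) = fun _ => 0 :=
        radialPoly_negc _ _ (by
          rintro ⟨h1, -⟩
          rw [natAbs_coe_add_one] at h1
          omega)
      have e4 : radialPoly (m - 1) ((m : ℤ) - 1) = radialPolyAux (m - 1) (m - 1) := by
        have hn : ((m : ℤ) - 1).natAbs = m - 1 := natAbs_coe_sub_one m hm0
        funext x
        simp only [radialPoly, hn,
          if_pos (⟨le_refl _, by simp⟩ : m - 1 ≤ m - 1 ∧ Even (m - 1 - (m - 1)))]
      rw [e1, e2, e3, e4, deriv_radialPolyAux]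
      rw [show deriv (fun _ : ℝ => (0:ℝ)) r = 0 from deriv_const r 0]
      rw [radialPolyAux_eq]
      rw [show (m - m) / 2 = 0 by omega, show ((m-1) - (m-1)) / 2 = 0 by omega]
      rw [Finset.sum_range_one, Finset.sum_range_one]
      have c1 : coefA m m 0 = 1 := by
        unfold coefA
        rw [show (m + m)/2 = m by omega, show (m - m)/2 = 0 by omega]
        simp only [pow_zero, Nat.sub_zero, Nat.factorial_zero, Nat.cast_one, one_mul, mul_one]
        exact div_self (by positivity)
      have c2 : coefA (m-1) (m-1) 0 = 1 := by
        unfold coefA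
        rw [show ((m-1) + (m-1))/2 = m-1 by omega, show ((m-1) - (m-1))/2 = 0 by omega]
        simp only [pow_zero, Nat.sub_zero, Nat.factorial_zero, Nat.cast_one, one_mul, mul_one]
        exact div_self (by positivity)
      rw [c1, c2]
      simp only [Nat.mul_zero, Nat.sub_zero]
      ring
    · -- t ≥ 1
      have hm2 : m = l + 2*t := by omega
      have e1 : radialPoly m (l : ℤ) = radialPolyAux m l :=
        radialPoly_pos m l ⟨hlm, ⟨t, ht⟩⟩
      have e2 : radialPoly (m - 2) (l : ℤ) = radialPolyAux (m - 2) l :=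
        radialPoly_pos _ l ⟨by omega, ⟨t - 1, by omega⟩⟩
      rcases Nat.eq_zero_or_pos l with hl0 | hl1
      · -- l = 0
        subst hl0
        have e3 : radialPoly (m - 1) (((0:ℕ) : ℤ) - 1) = radialPolyAux (m - 1) 1 := by
          have hn : (((0:ℕ) : ℤ) - 1).natAbs = 1 := natAbs_zero_sub_one
          funext x
          simp only [radialPoly, hn, if_pos (⟨by omega, ⟨t - 1, by omega⟩⟩ :
            1 ≤ m - 1 ∧ Even (m - 1 - 1))]
        have e4 : radialPoly (m - 1) (((0:ℕ) : ℤ) + 1) = radialPolyAux (m - 1) 1 := by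
          have hn : (((0:ℕ) : ℤ) + 1).natAbs = 1 := natAbs_coe_add_one 0
          funext x
          simp only [radialPoly, hn, if_pos (⟨by omega, ⟨t - 1, by omega⟩⟩ :
            1 ≤ m - 1 ∧ Even (m - 1 - 1))]
        rw [e1, e2, e3, e4, deriv_radialPolyAux, deriv_radialPolyAux, radialPolyAux_eq]
        rw [show (m - 0)/2 = t by omega, show ((m - 2) - 0)/2 = t - 1 by omega,
          show ((m - 1) - 1)/2 = t - 1 by omega, show t - 1 + 1 = t by omega]
        -- pad sums
        have hG : ∑ j ∈ Finset.range t,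
            coefA (m-2) 0 j * (((m - 2 - 2*j : ℕ) : ℝ) * r ^ (m - 2 - 2*j - 1))
            = ∑ u ∈ Finset.range (t+1), (if u = 0 then 0 else
              coefA (m-2) 0 (u-1) * (((m - 2 - 2*(u-1) : ℕ) : ℝ) * r ^ (m - 2 - 2*(u-1) - 1))) := by
          rw [Finset.sum_range_succ']
          simp
        have hH : ∑ j ∈ Finset.range t, coefA (m-1) 1 j * r ^ (m - 1 - 2*j)
            = ∑ u ∈ Finset.range (t+1), (if u = t then 0 else
              coefA (m-1) 1 u * r ^ (m - 1 - 2*u)) := by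
          rw [Finset.sum_range_succ, if_pos rfl, add_zero]
          exact Finset.sum_congr rfl fun u hu =>
            (if_neg (by have := Finset.mem_range.mp hu; omega)).symm
        rw [hG, hH, ← Finset.sum_add_distrib, Finset.mul_sum, ← Finset.sum_add_distrib]
        refine Finset.sum_congr rfl fun u hu => ?_
        have hut : u ≤ t := by have := Finset.mem_range.mp hu; omega
        rcases Nat.eq_zero_or_pos u with hu0 | hu1
        · subst hu0
          rw [if_pos rfl, if_neg (by omega), zero_add]
          unfold coefA
          rw [show (m + 0)/2 = t by omega, show (m - 0)/2 = t by omega,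
            show ((m-1) + 1)/2 = t by omega, show ((m-1) - 1)/2 = t - 1 by omega]
          have hk := key_u0 m t t (r ^ (m - 1)) (by omega) (by omega) (by omega)
          simp only [Nat.mul_zero, Nat.sub_zero, pow_zero, Nat.factorial_zero,
            Nat.cast_one] at hk ⊢
          linear_combination hk
        rcases Nat.lt_or_ge u t with hut' | hut'
        · -- 0 < u < t
          rw [if_neg (by omega), if_neg (by omega)]
          unfold coefA
          rw [show (m + 0)/2 = t by omega, show (m - 0)/2 = t by omega,
            show ((m-1) + 1)/2 = t by omega, show ((m-1) - 1)/2 = t - 1 by omega,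
            show ((m-2) + 0)/2 = t - 1 by omega, show ((m-2) - 0)/2 = t - 1 by omega,
            show (m - 2) - (u - 1) = m - 1 - u by omega,
            show t - 1 - (u - 1) = t - u by omega,
            show m - 2 - 2*(u-1) = m - 2*u by omega,
            show m - 1 - 2*u = m - 2*u - 1 by omega]
          have hk := key_mid m t t u (r ^ (m - 2*u - 1)) (by omega) (by omega) (by omega)
            (by omega)
          linear_combination hk
        · -- u = t
          have hut'' : u = t := by omega
          subst hut''
          rw [if_neg (by omega), if_pos rfl]
          rw [show m - 2*u = 0 by omega, show m - 2 - 2*(u-1) = 0 by omega]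
          norm_num
      · -- l ≥ 1
        have e3 : radialPoly (m - 1) ((l : ℤ) - 1) = radialPolyAux (m - 1) (l - 1) := by
          have hn : ((l : ℤ) - 1).natAbs = l - 1 := natAbs_coe_sub_one l hl1
          funext x
          simp only [radialPoly, hn, if_pos (⟨by omega, ⟨t, by omega⟩⟩ :
            l - 1 ≤ m - 1 ∧ Even (m - 1 - (l - 1)))]
        have e4 : radialPoly (m - 1) ((l : ℤ) + 1) = radialPolyAux (m - 1) (l + 1) := by
          have hn : ((l : ℤ) + 1).natAbs = l + 1 := natAbs_coe_add_one l
          funext x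
          simp only [radialPoly, hn, if_pos (⟨by omega, ⟨t - 1, by omega⟩⟩ :
            l + 1 ≤ m - 1 ∧ Even (m - 1 - (l + 1)))]
        rw [e1, e2, e3, e4, deriv_radialPolyAux, deriv_radialPolyAux, radialPolyAux_eq,
          radialPolyAux_eq]
        rw [show (m - l)/2 = t by omega, show ((m - 2) - l)/2 = t - 1 by omega,
          show ((m - 1) - (l - 1))/2 = t by omega, show ((m - 1) - (l + 1))/2 = t - 1 by omega,
          show t - 1 + 1 = t by omega]
        have hG : ∑ j ∈ Finset.range t,
            coefA (m-2) l j * (((m - 2 - 2*j : ℕ) : ℝ) * r ^ (m - 2 - 2*j - 1))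
            = ∑ u ∈ Finset.range (t+1), (if u = 0 then 0 else
              coefA (m-2) l (u-1) * (((m - 2 - 2*(u-1) : ℕ) : ℝ) * r ^ (m - 2 - 2*(u-1) - 1))) := by
          rw [Finset.sum_range_succ']
          simp
        have hH : ∑ j ∈ Finset.range t, coefA (m-1) (l+1) j * r ^ (m - 1 - 2*j)
            = ∑ u ∈ Finset.range (t+1), (if u = t then 0 else
              coefA (m-1) (l+1) u * r ^ (m - 1 - 2*u)) := by
          rw [Finset.sum_range_succ, if_pos rfl, add_zero]
          exact Finset.sum_congr rfl fun u hu =>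
            (if_neg (by have := Finset.mem_range.mp hu; omega)).symm
        rw [hG, hH, ← Finset.sum_add_distrib, Finset.mul_sum, ← Finset.sum_add_distrib]
        refine Finset.sum_congr rfl fun u hu => ?_
        have hut : u ≤ t := by have := Finset.mem_range.mp hu; omega
        rcases Nat.eq_zero_or_pos u with hu0 | hu1
        · subst hu0
          rw [if_pos rfl, if_neg (by omega), zero_add]
          unfold coefA
          rw [show (m + l)/2 = l + t by omega, show (m - l)/2 = t by omega,
            show ((m-1) + (l-1))/2 = l + t - 1 by omega,
            show ((m-1) - (l-1))/2 = t by omega,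
            show ((m-1) + (l+1))/2 = l + t by omega,
            show ((m-1) - (l+1))/2 = t - 1 by omega]
          have hk := key_u0 m (l + t) t (r ^ (m - 1)) (by omega) (by omega) (by omega)
          simp only [Nat.mul_zero, Nat.sub_zero, pow_zero, Nat.factorial_zero,
            Nat.cast_one] at hk ⊢
          linear_combination hk
        rcases Nat.lt_or_ge u t with hut' | hut'
        · rw [if_neg (by omega), if_neg (by omega)]
          unfold coefA
          rw [show (m + l)/2 = l + t by omega, show (m - l)/2 = t by omega,
            show ((m-1) + (l-1))/2 = l + t - 1 by omega,
            show ((m-1) - (l-1))/2 = t by omega,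
            show ((m-1) + (l+1))/2 = l + t by omega,
            show ((m-1) - (l+1))/2 = t - 1 by omega,
            show ((m-2) + l)/2 = l + t - 1 by omega, show ((m-2) - l)/2 = t - 1 by omega,
            show (m - 2) - (u - 1) = m - 1 - u by omega,
            show t - 1 - (u - 1) = t - u by omega,
            show l + t - 1 - (u - 1) = l + t - u by omega,
            show m - 2 - 2*(u-1) = m - 2*u by omega,
            show m - 1 - 2*u = m - 2*u - 1 by omega]
          have hk := key_mid m (l + t) t u (r ^ (m - 2*u - 1)) (by omega) (by omega) (by omega)
            (by omega)
          linear_combination hk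
        · have hut'' : u = t := by omega
          subst hut''
          rw [if_neg (by omega), if_pos rfl, add_zero]
          unfold coefA
          rw [show (m + l)/2 = l + u by omega, show (m - l)/2 = u by omega,
            show ((m-1) + (l-1))/2 = l + u - 1 by omega,
            show ((m-1) - (l-1))/2 = u by omega,
            show ((m-2) + l)/2 = l + u - 1 by omega, show ((m-2) - l)/2 = u - 1 by omega,
            show (m - 2) - (u - 1) = m - 1 - u by omega,
            show u - 1 - (u - 1) = u - u by omega,
            show l + u - 1 - (u - 1) = l + u - u by omega,
            show m - 2 - 2*(u-1) = m - 2*u by omega,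
            show m - 1 - 2*u = m - 2*u - 1 by omega]
          have hk := key_uQ m (l + u) u (r ^ (m - 2*u - 1)) (by omega) (by omega) (by omega)
          linear_combination hk
  · -- inadmissible
    have hL : radialPoly m (l : ℤ) = fun _ => 0 :=
      radialPoly_negc _ _ (by
        rintro ⟨h1, h2⟩
        simp only [Int.natAbs_natCast] at h1 h2
        exact hadm ⟨h1, h2⟩)
    rcases Nat.eq_zero_or_pos m with hm0 | hm0
    · subst hm0
      rw [hL]
      simp
    · by_cases hml : m = 1 ∧ l = 0
      · obtain ⟨hm1, hl0⟩ := hml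
        subst hm1
        subst hl0
        rw [hL]
        have e0 : radialPoly (1 - 2) (((0:ℕ) : ℤ)) = radialPolyAux 0 0 :=
          radialPoly_pos 0 0 ⟨le_refl 0, by simp⟩
        have m1 : radialPoly (1 - 1) (((0:ℕ) : ℤ) - 1) = fun _ => 0 :=
          radialPoly_negc _ _ (by
            rintro ⟨h1, -⟩
            rw [natAbs_zero_sub_one] at h1
            omega)
        have m2 : radialPoly (1 - 1) (((0:ℕ) : ℤ) + 1) = fun _ => 0 :=
          radialPoly_negc _ _ (by
            rintro ⟨h1, -⟩
            rw [natAbs_coe_add_one] at h1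
            omega)
        rw [e0, m1, m2, deriv_radialPolyAux]
        simp
      · have hadm' : ¬(l ≤ m ∧ (m - l) % 2 = 0) := fun h => hadm ⟨h.1, Nat.even_iff.mpr h.2⟩
        have h2 : radialPoly (m - 2) (l : ℤ) = fun _ => 0 :=
          radialPoly_negc _ _ (by
            rintro ⟨h1, h2⟩
            simp only [Int.natAbs_natCast] at h1 h2
            rw [Nat.even_iff] at h2
            exact hadm' ⟨by omega, by omega⟩)
        have h3 : radialPoly (m - 1) ((l : ℤ) - 1) = fun _ => 0 :=
          radialPoly_negc _ _ (by
            rintro ⟨h1, h2⟩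
            rcases Nat.eq_zero_or_pos l with hl0 | hl1
            · subst hl0
              rw [natAbs_zero_sub_one] at h1 h2
              rw [Nat.even_iff] at h2
              exact hadm' ⟨by omega, by omega⟩
            · rw [natAbs_coe_sub_one l hl1] at h1 h2
              rw [Nat.even_iff] at h2
              exact hadm' ⟨by omega, by omega⟩)
        have h4 : radialPoly (m - 1) ((l : ℤ) + 1) = fun _ => 0 :=
          radialPoly_negc _ _ (by
            rintro ⟨h1, h2⟩
            rw [natAbs_coe_add_one] at h1 h2
            rw [Nat.even_iff] at h2
            exact hadm' ⟨by omega, by omega⟩)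
        rw [hL, h2, h3, h4]
        simp

lemma contDiff_radialPoly (m : ℕ) (l : ℤ) (n : ℕ) : ContDiff ℝ n (radialPoly m l) := by
  by_cases h : l.natAbs ≤ m ∧ Even (m - l.natAbs)
  · have e : radialPoly m l = fun r => ∑ j ∈ Finset.range ((m - l.natAbs) / 2 + 1),
        coefA m l.natAbs j * r ^ (m - 2 * j) := by
      funext r
      rw [radialPoly, if_pos h, radialPolyAux_eq]
    rw [e]
    apply ContDiff.sum
    intro j _
    exact contDiff_const.mul (contDiff_id.pow _)
  · rw [radialPoly_negc m l h]
    exact contDiff_const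

lemma iteratedDeriv_zero_fun (k : ℕ) (r : ℝ) : iteratedDeriv k (fun _ : ℝ => (0 : ℝ)) r = 0 := by
  induction k generalizing r with
  | zero => simp
  | succ k ih =>
    rw [iteratedDeriv_succ']
    have e : deriv (fun _ : ℝ => (0 : ℝ)) = fun _ : ℝ => (0 : ℝ) := by
      funext x
      simp
    rw [e]
    exact ih r

lemma itD_add {f g : ℝ → ℝ} (k : ℕ) (hf : ContDiff ℝ k f) (hg : ContDiff ℝ k g) (r : ℝ) :
    iteratedDeriv k (fun x => f x + g x) r = iteratedDeriv k f r + iteratedDeriv k g r := by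
  simp only [← iteratedDerivWithin_univ]
  exact iteratedDerivWithin_add (Set.mem_univ r) uniqueDiffOn_univ hf.contDiffWithinAt hg.contDiffWithinAt

lemma itD_cmul (c : ℝ) {f : ℝ → ℝ} (k : ℕ) (hf : ContDiff ℝ k f) (r : ℝ) :
    iteratedDeriv k (fun x => c * f x) r = c * iteratedDeriv k f r := by
  simp only [← iteratedDerivWithin_univ]
  exact iteratedDerivWithin_const_mul (Set.mem_univ r) uniqueDiffOn_univ c hf.contDiffWithinAt

lemma radialPoly_natAbs (m : ℕ) (z : ℤ) : radialPoly m z = radialPoly m ((z.natAbs : ℕ) : ℤ) := by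
  funext x
  simp [radialPoly, Int.natAbs_natCast, Int.natAbs_abs]

lemma arithA (k : ℕ) (z y x : ℝ) (hz : 0 ≤ z) (hzy : z ≤ y) (hyx : y + 1 ≤ x)
    (hz2 : z + 2 ≤ x) :
    z ^ (2 * (k + 1)) + x * (y ^ (2 * k) + y ^ (2 * k)) ≤ x ^ (2 * (k + 1)) := by
  have hy : (0:ℝ) ≤ y := le_trans hz hzy
  have hx : (0:ℝ) ≤ x := by linarith
  have hyk : y ^ (2 * k) ≤ x ^ (2 * k) := pow_le_pow_left₀ hy (by linarith) _
  have hzk : z ^ (2 * k) ≤ y ^ (2 * k) := pow_le_pow_left₀ hz hzy _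
  have hykn : (0:ℝ) ≤ y ^ (2 * k) := pow_nonneg hy _
  calc z ^ (2 * (k + 1)) + x * (y ^ (2 * k) + y ^ (2 * k))
      = z ^ 2 * z ^ (2 * k) + 2 * x * y ^ (2 * k) := by
        rw [show 2 * (k + 1) = 2 + 2 * k by ring, pow_add]
        ring
    _ ≤ z ^ 2 * y ^ (2 * k) + 2 * x * y ^ (2 * k) := by
        have := mul_le_mul_of_nonneg_left hzk (by positivity : (0:ℝ) ≤ z ^ 2)
        linarith
    _ = (z ^ 2 + 2 * x) * y ^ (2 * k) := by ring
    _ ≤ x ^ 2 * y ^ (2 * k) := by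
        have h1 : z ^ 2 + 2 * x ≤ x ^ 2 := by nlinarith
        exact mul_le_mul_of_nonneg_right h1 hykn
    _ ≤ x ^ 2 * x ^ (2 * k) := mul_le_mul_of_nonneg_left hyk (by positivity)
    _ = x ^ (2 * (k + 1)) := by
        rw [show 2 * (k + 1) = 2 + 2 * k by ring, pow_add]

lemma arithB (k : ℕ) (z y x : ℝ) (hz : 0 ≤ z) (hzy : z ≤ y) (hyx : y + 1 ≤ x) :
    z ^ (2 * (k + 1)) + x * (y ^ (2 * k) + 0) ≤ x ^ (2 * (k + 1)) := by
  have hy : (0:ℝ) ≤ y := le_trans hz hzy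
  have hx : (0:ℝ) ≤ x := by linarith
  have hyk : y ^ (2 * k) ≤ x ^ (2 * k) := pow_le_pow_left₀ hy (by linarith) _
  have hzk : z ^ (2 * k) ≤ y ^ (2 * k) := pow_le_pow_left₀ hz hzy _
  have hykn : (0:ℝ) ≤ y ^ (2 * k) := pow_nonneg hy _
  calc z ^ (2 * (k + 1)) + x * (y ^ (2 * k) + 0)
      = z ^ 2 * z ^ (2 * k) + x * y ^ (2 * k) := by
        rw [show 2 * (k + 1) = 2 + 2 * k by ring, pow_add]
        ring
    _ ≤ z ^ 2 * y ^ (2 * k) + x * y ^ (2 * k) := by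
        have := mul_le_mul_of_nonneg_left hzk (by positivity : (0:ℝ) ≤ z ^ 2)
        linarith
    _ = (z ^ 2 + x) * y ^ (2 * k) := by ring
    _ ≤ x ^ 2 * y ^ (2 * k) := by
        have h1 : z ^ 2 + x ≤ x ^ 2 := by nlinarith
        exact mul_le_mul_of_nonneg_right h1 hykn
    _ ≤ x ^ 2 * x ^ (2 * k) := mul_le_mul_of_nonneg_left hyk (by positivity)
    _ = x ^ (2 * (k + 1)) := by
        rw [show 2 * (k + 1) = 2 + 2 * k by ring, pow_add]

lemma main_bound_aux :
    ∀ m : ℕ, ∀ l k : ℕ, ∀ r : ℝ, 0 ≤ r → r ≤ 1 →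
      |iteratedDeriv k (radialPoly m (l : ℤ)) r| ≤ (m : ℝ) ^ (2 * k) := by
  intro m
  induction m using Nat.strong_induction_on with
  | _ m IH =>
  intro l k r h0 h1
  cases k with
  | zero =>
    simp only [iteratedDeriv_zero, Nat.mul_zero, pow_zero]
    by_cases h : l ≤ m ∧ Even (m - l)
    · rw [radialPoly_pos m l h]
      exact radialPolyAux_abs_le_one m l h.1 h.2 h0 h1
    · rw [radialPoly_negc m (l : ℤ) (by simpa [Int.natAbs_natCast] using h)]
      simp
  | succ k =>
    rcases Nat.eq_zero_or_pos m with hm0 | hm1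
    · -- m = 0
      subst hm0
      have hder0 : deriv (radialPoly 0 (l : ℤ)) = fun _ => 0 := by
        rcases Nat.eq_zero_or_pos l with hl0 | hl1
        · subst hl0
          rw [radialPoly_pos 0 0 ⟨le_refl 0, by simp⟩]
          have e : radialPolyAux 0 0 = fun _ : ℝ => coefA 0 0 0 := by
            funext x
            rw [radialPolyAux_eq]
            simp
          rw [e]
          funext x
          simp
        · rw [radialPoly_negc 0 (l : ℤ) (by
            rintro ⟨hh, -⟩
            simp only [Int.natAbs_natCast] at hh
            omega)]
          funext x
          simp
      rw [iteratedDeriv_succ', hder0, iteratedDeriv_zero_fun]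
      simp [zero_pow]
    · -- m ≥ 1
      rw [iteratedDeriv_succ']
      have hder : deriv (radialPoly m (l : ℤ)) = fun x =>
          deriv (radialPoly (m - 2) (l : ℤ)) x +
            (m : ℝ) * (radialPoly (m - 1) ((l : ℤ) - 1) x + radialPoly (m - 1) ((l : ℤ) + 1) x) :=
        funext fun x => deriv_radialPoly m l x
      rw [hder]
      -- smoothness
      have cdA : ContDiff ℝ k (fun x => deriv (radialPoly (m - 2) (l : ℤ)) x) := by
        have h1 : ContDiff ℝ ((k : WithTop ℕ∞) + 1) (radialPoly (m - 2) (l : ℤ)) := by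
          have := contDiff_radialPoly (m - 2) (l : ℤ) (k + 1)
          exact_mod_cast this
        exact (contDiff_succ_iff_deriv.mp h1).2.2
      have cdB : ContDiff ℝ k (radialPoly (m - 1) ((l : ℤ) - 1)) :=
        contDiff_radialPoly _ _ k
      have cdC : ContDiff ℝ k (radialPoly (m - 1) ((l : ℤ) + 1)) :=
        contDiff_radialPoly _ _ k
      rw [itD_add k cdA (by exact contDiff_const.mul (cdB.add cdC)) r,
        itD_cmul (m : ℝ) k (cdB.add cdC) r,
        itD_add k cdB cdC r]
      have hA : iteratedDeriv k (fun x => deriv (radialPoly (m - 2) (l : ℤ)) x) r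
          = iteratedDeriv (k + 1) (radialPoly (m - 2) (l : ℤ)) r := by
        rw [iteratedDeriv_succ']
      rw [hA]
      have b1 : |iteratedDeriv (k + 1) (radialPoly (m - 2) (l : ℤ)) r|
          ≤ ((m - 2 : ℕ) : ℝ) ^ (2 * (k + 1)) :=
        IH (m - 2) (by omega) l (k + 1) r h0 h1
      have b2 : |iteratedDeriv k (radialPoly (m - 1) ((l : ℤ) - 1)) r|
          ≤ ((m - 1 : ℕ) : ℝ) ^ (2 * k) := by
        rw [radialPoly_natAbs (m - 1) ((l : ℤ) - 1)]
        exact IH (m - 1) (by omega) _ k r h0 h1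
      -- cast facts
      have hc1 : ((m - 2 : ℕ) : ℝ) ≤ ((m - 1 : ℕ) : ℝ) := by
        exact_mod_cast Nat.cast_le.mpr (by omega : m - 2 ≤ m - 1)
      have hc2 : ((m - 1 : ℕ) : ℝ) + 1 ≤ (m : ℝ) := by
        have : ((m - 1 : ℕ) : ℝ) + 1 = ((m - 1 + 1 : ℕ) : ℝ) := by push_cast; ring
        rw [this]
        exact_mod_cast Nat.cast_le.mpr (by omega : m - 1 + 1 ≤ m)
      have hz : (0 : ℝ) ≤ ((m - 2 : ℕ) : ℝ) := Nat.cast_nonneg _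
      by_cases hc : l + 1 ≤ m - 1
      · have b3 : |iteratedDeriv k (radialPoly (m - 1) ((l : ℤ) + 1)) r|
            ≤ ((m - 1 : ℕ) : ℝ) ^ (2 * k) := by
          rw [radialPoly_natAbs (m - 1) ((l : ℤ) + 1)]
          exact IH (m - 1) (by omega) _ k r h0 h1
        have hz2 : ((m - 2 : ℕ) : ℝ) + 2 ≤ (m : ℝ) := by
          have : ((m - 2 : ℕ) : ℝ) + 2 = ((m - 2 + 2 : ℕ) : ℝ) := by push_cast; ring
          rw [this]
          exact_mod_cast Nat.cast_le.mpr (by omega : m - 2 + 2 ≤ m)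
        set T1 := iteratedDeriv (k+1) (radialPoly (m - 2) (l : ℤ)) r with hT1
        set T2 := iteratedDeriv k (radialPoly (m - 1) ((l : ℤ) - 1)) r with hT2
        set T3 := iteratedDeriv k (radialPoly (m - 1) ((l : ℤ) + 1)) r with hT3
        have hmn : (0:ℝ) ≤ (m : ℝ) := Nat.cast_nonneg _
        calc |T1 + (m : ℝ) * (T2 + T3)|
            ≤ |T1| + |(m : ℝ) * (T2 + T3)| := abs_add_le _ _
          _ = |T1| + (m : ℝ) * |T2 + T3| := by rw [abs_mul, abs_of_nonneg hmn]
          _ ≤ |T1| + (m : ℝ) * (|T2| + |T3|) :=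
              add_le_add_right (mul_le_mul_of_nonneg_left (abs_add_le _ _) hmn) _
          _ ≤ ((m - 2 : ℕ) : ℝ) ^ (2 * (k + 1)) +
              (m : ℝ) * (((m - 1 : ℕ) : ℝ) ^ (2 * k) + ((m - 1 : ℕ) : ℝ) ^ (2 * k)) :=
              add_le_add b1 (mul_le_mul_of_nonneg_left (add_le_add b2 b3) hmn)
          _ ≤ (m : ℝ) ^ (2 * (k + 1)) := arithA k _ _ _ hz hc1 hc2 hz2
      · have hC : radialPoly (m - 1) ((l : ℤ) + 1) = fun _ => 0 :=
          radialPoly_negc _ _ (by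
            rintro ⟨hh, -⟩
            rw [natAbs_coe_add_one] at hh
            omega)
        rw [hC, iteratedDeriv_zero_fun]
        set T1 := iteratedDeriv (k+1) (radialPoly (m - 2) (l : ℤ)) r with hT1
        set T2 := iteratedDeriv k (radialPoly (m - 1) ((l : ℤ) - 1)) r with hT2
        have hmn : (0:ℝ) ≤ (m : ℝ) := Nat.cast_nonneg _
        calc |T1 + (m : ℝ) * (T2 + 0)|
            ≤ |T1| + |(m : ℝ) * (T2 + 0)| := abs_add_le _ _
          _ = |T1| + (m : ℝ) * (|T2| + 0) := by
              rw [abs_mul, abs_of_nonneg hmn, add_zero, add_zero]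
          _ ≤ ((m - 2 : ℕ) : ℝ) ^ (2 * (k + 1)) +
              (m : ℝ) * (((m - 1 : ℕ) : ℝ) ^ (2 * k) + 0) :=
              add_le_add b1 (mul_le_mul_of_nonneg_left (add_le_add b2 (le_refl 0)) hmn)
          _ ≤ (m : ℝ) ^ (2 * (k + 1)) := arithB k _ _ _ hz hc1 hc2


lemma main_bound (m : ℕ) (l : ℕ) (k : ℕ) {r : ℝ} (h0 : 0 ≤ r) (h1 : r ≤ 1) :
    |iteratedDeriv k (radialPoly m (l : ℤ)) r| ≤ (m : ℝ) ^ (2 * k) :=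
  main_bound_aux m l k r h0 h1

end ZernAux


/-- Uniform bound for the `k`-th derivative of a radial polynomial on `[0,1]`:
`1` for `k = 0` and `m^{2k}` for `k ≥ 1`. -/
theorem radialPoly_iteratedDeriv_bound (k m : ℕ) (l : ℤ) :
    ∀ r ∈ Set.Icc (0 : ℝ) 1,
      |iteratedDeriv k (radialPoly m l) r| ≤
        if k = 0 then 1 else (m : ℝ) ^ (2 * k) := by
  intro r hr
  have h1 : radialPoly m l = radialPoly m (l.natAbs : ℤ) := by
    funext x
    simp [radialPoly, Int.natAbs_abs]
  have h2 := ZernAux.main_bound m l.natAbs k hr.1 hr.2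
  rw [h1]
  rcases Nat.eq_zero_or_pos k with hk | hk
  · subst hk
    simpa using h2
  · rw [if_neg hk.ne']
    exact h2
end
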